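/- arXiv:2605.04411 — 2 statements merged into one kernel-verified Lean document; each statement's English description precedes it below -/
import Mathlib

section
/- Let c>1 be non-integral, h ≥ 2H_0(c)+1, 0 < δ < (h−2H_0(c))/(2h(h−1)H_0(c)), and ω ≥ 1/h − δ. Fix ν with 0 < ν < (1/3)·min{1/c, 1/h − δ}, and for a large integer N set L := N^ν and 𝔐 := {α ∈ [0,1] : ‖α‖ ≤ L/N}, where ‖·‖ denotes distance to the nearest integer. Define U(α;x) := ∑_{n≤x} n^{ω−1} e(nα) and U^♯(α;x) := ∑_{x/h≤n≤x} n^{ω−1} e(nα). Then there is a constant C such that uniformly for α ∈ 𝔐 and all large N: |T(α;N) − (1/c)U(α;N)| ≤ C·N^{ω−2ν} and |T^♯(α;N) − (1/c)U^♯(α;N)| ≤ C·N^{ω−2ν}. -/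
set_option maxHeartbeats 1000000


open MeasureTheory Filter Finset Set

noncomputable section

/-- `e(α) = exp(2πiα)`. -/
def eR (α : ℝ) : ℂ := Complex.exp (2 * Real.pi * Complex.I * α)

/-- The Piatetski-Shapiro set `N_(c) = {⌊n^c⌋ : n ∈ ℕ, n ≥ 1}`. -/
def NPS (c : ℝ) : Set ℕ := {m | ∃ n : ℕ, 1 ≤ n ∧ m = ⌊(n : ℝ) ^ c⌋₊}

/-- `H₀(c)` for non-integral real `c > 1`. -/
def H0c (c : ℝ) : ℝ :=
  if c < 2 then 2 else ((⌊2 * c⌋ : ℝ) + 1) * ((⌊2 * c⌋ : ℝ) + 2) / 2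

/-- `H₀(k)` for a positive integer `k`. -/
def H0k (k : ℕ) : ℕ :=
  if k ≤ 4 then 2 ^ (k - 1) else k * (k - 1) / 2 + Nat.sqrt (2 * k + 2)

/-- `k`-th powers of positive integers. -/
def Npow (k : ℕ) : Set ℕ := {m | ∃ n : ℕ, 1 ≤ n ∧ m = n ^ k}

/-- `k`-th powers of Piatetski-Shapiro numbers. -/
def NPSpow (c : ℝ) (k : ℕ) : Set ℕ := {m | ∃ n ∈ NPS c, m = n ^ k}

/-- `k`-th powers of primes. -/
def Ppow (k : ℕ) : Set ℕ := {m | ∃ p : ℕ, p.Prime ∧ m = p ^ k}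

/-- `k`-th powers of Piatetski-Shapiro primes. -/
def PPSpow (c : ℝ) (k : ℕ) : Set ℕ := {m | ∃ p ∈ NPS c, p.Prime ∧ m = p ^ k}

/-- The representation function `r_{A,h}(n)`: the number of ordered `h`-tuples
from `A` summing to `n`. -/
def rep (A : Set ℕ) (h n : ℕ) : ℕ :=
  Nat.card {x : Fin h → ℕ // (∀ i, x i ∈ A) ∧ ∑ i, x i = n}

open scoped Classical in
/-- The finite set of ordered `h`-tuples of elements of `A` summing to `N`. -/
def tuples (A : Set ℕ) (h N : ℕ) : Finset (Fin h → ℕ) :=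
  (Fintype.piFinset fun _ : Fin h => Finset.range (N + 1)).filter
    (fun x => (∀ i, x i ∈ A) ∧ ∑ i, x i = N)

/-- Weighted exponential sum `∑_{1 ≤ n ≤ x, n ∈ A} w(n) e(nα)`. -/
def expSum (A : Set ℕ) (w : ℕ → ℝ) (α x : ℝ) : ℂ :=
  ∑ n ∈ Finset.Icc 1 ⌊x⌋₊, ((Set.indicator A w n : ℝ) : ℂ) * eR (n * α)

/-- Weighted exponential sum `∑_{y ≤ n ≤ x, n ∈ A} w(n) e(nα)`. -/
def expSumI (A : Set ℕ) (w : ℕ → ℝ) (α y x : ℝ) : ℂ :=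
  ∑ n ∈ Finset.Icc ⌈y⌉₊ ⌊x⌋₊, ((Set.indicator A w n : ℝ) : ℂ) * eR (n * α)

/-- Distance to the nearest integer. -/
def distInt (α : ℝ) : ℝ := |α - (round α : ℝ)|

/-- The major arc `𝔐 = {α ∈ [0,1] : ‖α‖ ≤ N^ν / N}`. -/
def MajorArc (ν : ℝ) (N : ℕ) : Set ℝ :=
  {α ∈ Set.Icc (0:ℝ) 1 | distInt α ≤ (N : ℝ) ^ ν / N}

/-- The minor arc `𝔪 = [0,1] ∖ 𝔐`. -/
def MinorArc (ν : ℝ) (N : ℕ) : Set ℝ := Set.Icc (0:ℝ) 1 \ MajorArc ν N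

/-- `T(α;x) = ∑_{n≤x} n^{ω-1/c} 1_{N_(c)}(n) e(nα)`. -/
def Tc (c ω : ℝ) (α x : ℝ) : ℂ := expSum (NPS c) (fun n => (n : ℝ) ^ (ω - 1 / c)) α x

/-- `T^♯(α;x) = ∑_{x/h≤n≤x} n^{ω-1/c} 1_{N_(c)}(n) e(nα)`. -/
def TcSharp (c ω : ℝ) (h : ℕ) (α x : ℝ) : ℂ :=
  expSumI (NPS c) (fun n => (n : ℝ) ^ (ω - 1 / c)) α (x / h) x

/-- `U(α;x) = ∑_{n≤x} n^{ω-1} e(nα)`. -/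
def Uc (ω : ℝ) (α x : ℝ) : ℂ :=
  ∑ n ∈ Finset.Icc 1 ⌊x⌋₊, (((n : ℝ) ^ (ω - 1) : ℝ) : ℂ) * eR (n * α)

/-- `U^♯(α;x) = ∑_{x/h≤n≤x} n^{ω-1} e(nα)`. -/
def UcSharp (ω : ℝ) (h : ℕ) (α x : ℝ) : ℂ :=
  ∑ n ∈ Finset.Icc ⌈x / h⌉₊ ⌊x⌋₊, (((n : ℝ) ^ (ω - 1) : ℝ) : ℂ) * eR (n * α)

/-- The complete Gauss-type sum `S(a,q) = ∑_{r=1}^q e(a r^k / q)`. -/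
def Swar (k a q : ℕ) : ℂ := ∑ r ∈ Finset.Icc 1 q, eR (((a * r ^ k : ℕ) : ℝ) / q)

/-- The singular series of Waring's problem. -/
def SingSer (k h n : ℕ) : ℝ :=
  (∑' q : ℕ, ∑ a ∈ (Finset.Icc 1 q).filter (fun a => Nat.gcd a q = 1),
      (Swar k a q / (q : ℂ)) ^ h * eR (-(((n * a : ℕ) : ℝ) / q))).re

/-- The restricted Gauss-type sum `S*(q,a) = ∑_{1≤r≤q, (r,q)=1} e(a r^k / q)`. -/
def SwarStar (k a q : ℕ) : ℂ :=
  ∑ r ∈ (Finset.Icc 1 q).filter (fun r => Nat.gcd r q = 1), eR (((a * r ^ k : ℕ) : ℝ) / q)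

/-- The singular series of the Waring–Goldbach problem. -/
def SingSerStar (k h n : ℕ) : ℝ :=
  (∑' q : ℕ, ∑ a ∈ (Finset.Icc 1 q).filter (fun a => Nat.gcd a q = 1),
      (SwarStar k a q / (Nat.totient q : ℂ)) ^ h * eR (-(((n * a : ℕ) : ℝ) / q))).re

/-- `K(k) = ∏_{(p-1) ∣ k} p^{ν(k,p)}`. -/
def Kk (k : ℕ) : ℕ :=
  ∏ p ∈ (Finset.range (k + 2)).filter (fun p => p.Prime ∧ (p - 1) ∣ k),
    p ^ (k.factorization p + if p = 2 ∧ 2 ∣ k then 2 else 1)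

/-- A measurable positive function is regularly varying if `F(λx)/F(x)` converges
to a positive limit for every `λ > 0`. -/
def RegularlyVarying (F : ℝ → ℝ) : Prop :=
  Measurable F ∧ ∀ l : ℝ, 0 < l → ∃ L : ℝ, 0 < L ∧
    Filter.Tendsto (fun x => F (l * x) / F x) Filter.atTop (nhds L)

/-- Hypothesis (PSW). -/
def PSW (c : ℝ) (k : ℕ) (P : ℝ) : Prop :=
  ∃ C : ℝ, ∀ α ∈ Set.Ico (0:ℝ) 1, ∀ x : ℝ, 2 ≤ x →
    ‖(expSum (NPSpow c k) (fun _ => 1) α x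
      - (1 / c) * expSum (Npow k) (fun n => (n : ℝ) ^ ((1 / c - 1) / k)) α x)‖
      ≤ C * x ^ (1 / (c * k) - P)

/-- Hypothesis (PSWG). -/
def PSWG (c : ℝ) (k : ℕ) (P : ℝ) : Prop :=
  ∃ C : ℝ, ∀ α ∈ Set.Ico (0:ℝ) 1, ∀ x : ℝ, 2 ≤ x →
    ‖(expSum (PPSpow c k) (fun n => Real.log n) α x
      - (1 / c) * expSum (Ppow k) (fun n => (n : ℝ) ^ ((1 / c - 1) / k) * Real.log n) α x)‖
      ≤ C * x ^ (1 / (c * k) - P)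
-- MVT for rpow
lemma rpow_mvt (s : ℝ) {u t : ℝ} (hu : 0 < u) (hut : u < t) :
    ∃ ξ, u < ξ ∧ ξ < t ∧ t ^ s - u ^ s = s * ξ ^ (s - 1) * (t - u) := by
  obtain ⟨ξ, hξ, h⟩ := exists_hasDerivAt_eq_slope (fun x => x ^ s) (fun x => s * x ^ (s - 1)) hut
    (fun x hx => (Real.continuousAt_rpow_const x s
      (Or.inl (ne_of_gt (lt_of_lt_of_le hu hx.1)))).continuousWithinAt)
    (fun x hx => Real.hasDerivAt_rpow_const (Or.inl (ne_of_gt (lt_trans hu hx.1))))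
  refine ⟨ξ, hξ.1, hξ.2, ?_⟩
  rw [h]
  rw [div_mul_eq_mul_div, mul_div_assoc, div_self (sub_ne_zero.mpr hut.ne'), mul_one]

lemma rpow_sub_rpow_abs_le (s : ℝ) {u t : ℝ} (hu : 0 < u) (hut : u ≤ t) (h2 : t ≤ 2 * u) :
    |t ^ s - u ^ s| ≤ |s| * max 1 (2 ^ (1 - s)) * t ^ (s - 1) * (t - u) := by
  have ht : 0 < t := lt_of_lt_of_le hu hut
  rcases eq_or_lt_of_le hut with rfl | hlt
  · simp only [sub_self, abs_zero, mul_zero]; exact le_refl 0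
  obtain ⟨ξ, hξ1, hξ2, hξ⟩ := rpow_mvt s hu hlt
  have hξpos : 0 < ξ := lt_trans hu hξ1
  have hb : ξ ^ (s - 1) ≤ max 1 (2 ^ (1 - s)) * t ^ (s - 1) := by
    rcases le_or_gt 0 (s - 1) with hs1 | hs1
    · calc ξ ^ (s - 1) ≤ t ^ (s - 1) :=
            Real.rpow_le_rpow hξpos.le hξ2.le hs1
        _ ≤ max 1 (2 ^ (1 - s)) * t ^ (s - 1) := by
            nlinarith [Real.rpow_nonneg ht.le (s - 1), le_max_left (1:ℝ) (2 ^ (1 - s))]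
    · have h1 : ξ ^ (s - 1) ≤ (t / 2) ^ (s - 1) := by
        apply Real.rpow_le_rpow_of_nonpos (by linarith) (by linarith) hs1.le
      have h2' : (t / 2) ^ (s - 1) = 2 ^ (1 - s) * t ^ (s - 1) := by
        have e : (2:ℝ) ^ (1 - s) = (2 ^ (s - 1))⁻¹ := by
          rw [show (1 - s) = -(s - 1) by ring, Real.rpow_neg (by norm_num)]
        rw [Real.div_rpow ht.le (by norm_num), e, div_eq_mul_inv, mul_comm]
      calc ξ ^ (s - 1) ≤ 2 ^ (1 - s) * t ^ (s - 1) := by rw [← h2']; exact h1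
        _ ≤ max 1 (2 ^ (1 - s)) * t ^ (s - 1) := by
            apply mul_le_mul_of_nonneg_right (le_max_right _ _) (Real.rpow_nonneg ht.le _)
  rw [hξ, abs_mul, abs_mul, abs_of_nonneg (by linarith : (0:ℝ) ≤ t - u),
    abs_of_nonneg (Real.rpow_nonneg hξpos.le _)]
  apply mul_le_mul_of_nonneg_right _ (by linarith : (0:ℝ) ≤ t - u)
  rw [mul_assoc]
  exact mul_le_mul_of_nonneg_left hb (abs_nonneg s)

lemma rpow_comparable (p : ℝ) {a t : ℝ} (ha : 0 < a) (h1 : a / 2 ≤ t) (h2 : t ≤ 2 * a) :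
    t ^ p ≤ 2 ^ |p| * a ^ p := by
  have ht : 0 < t := lt_of_lt_of_le (by linarith) h1
  rcases le_or_gt 0 p with hp | hp
  · rw [abs_of_nonneg hp]
    calc t ^ p ≤ (2 * a) ^ p := Real.rpow_le_rpow ht.le h2 hp
      _ = 2 ^ p * a ^ p := Real.mul_rpow (by norm_num) ha.le
  · rw [abs_of_neg hp]
    calc t ^ p ≤ (a / 2) ^ p := Real.rpow_le_rpow_of_nonpos (by linarith) h1 hp.le
      _ = 2 ^ (-p) * a ^ p := by
          rw [Real.div_rpow ha.le (by norm_num), Real.rpow_neg (by norm_num : (0:ℝ) ≤ 2),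
            div_eq_mul_inv, mul_comm]

lemma sum_Icc_one_eq (f : ℕ → ℝ) (y : ℕ) :
    ∑ n ∈ Finset.Icc 1 y, f n = ∑ i ∈ Finset.range y, f (1 + i) := by
  rw [← Finset.Ico_add_one_right_eq_Icc, Finset.sum_Ico_eq_sum_range]
  simp

lemma sum_rpow_le (p : ℝ) (hp : -1 < p) :
    ∃ C, 0 < C ∧ ∀ y : ℕ, 1 ≤ y → ∑ n ∈ Finset.Icc 1 y, (n : ℝ) ^ p ≤ C * (y : ℝ) ^ (p + 1) := by
  have hp1 : 0 < p + 1 := by linarith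
  rcases le_or_gt p 0 with hple | hpgt
  · refine ⟨1 / (p + 1), by positivity, fun y hy => ?_⟩
    have key : ∀ i : ℕ, ((1 + i : ℕ) : ℝ) ^ p
        ≤ (((i + 1 : ℕ) : ℝ) ^ (p + 1) - ((i : ℕ) : ℝ) ^ (p + 1)) / (p + 1) := by
      intro i
      rcases Nat.eq_zero_or_pos i with rfl | hi
      · push_cast
        rw [Real.one_rpow, Real.one_rpow, Real.zero_rpow hp1.ne', sub_zero, le_div_iff₀ hp1,
          one_mul]
        linarith
      · have hi' : (0 : ℝ) < i := by exact_mod_cast hi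
        obtain ⟨ξ, hξ1, hξ2, hξ⟩ := rpow_mvt (p + 1) hi' (by linarith : (i : ℝ) < i + 1)
        push_cast
        rw [hξ, show p + 1 - 1 = p by ring, show (i : ℝ) + 1 - i = 1 by ring, mul_one,
          mul_comm (p + 1) _, mul_div_assoc, div_self hp1.ne', mul_one]
        exact Real.rpow_le_rpow_of_nonpos (by linarith) (by linarith) hple
    calc ∑ n ∈ Finset.Icc 1 y, (n : ℝ) ^ p
        = ∑ i ∈ Finset.range y, ((1 + i : ℕ) : ℝ) ^ p :=
          sum_Icc_one_eq (fun n => (n : ℝ) ^ p) y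
      _ ≤ ∑ i ∈ Finset.range y, (((i + 1 : ℕ) : ℝ) ^ (p + 1) - ((i : ℕ) : ℝ) ^ (p + 1)) / (p + 1) :=
          Finset.sum_le_sum fun i _ => key i
      _ = (∑ i ∈ Finset.range y, (((i + 1 : ℕ) : ℝ) ^ (p + 1) - ((i : ℕ) : ℝ) ^ (p + 1))) / (p + 1) :=
          (Finset.sum_div _ _ _).symm
      _ = (((y : ℕ) : ℝ) ^ (p + 1) - ((0 : ℕ) : ℝ) ^ (p + 1)) / (p + 1) := by
          rw [Finset.sum_range_sub (fun i : ℕ => ((i : ℕ) : ℝ) ^ (p + 1))]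
      _ = 1 / (p + 1) * (y : ℝ) ^ (p + 1) := by
          push_cast
          rw [Real.zero_rpow hp1.ne']
          ring
  · refine ⟨2 ^ (p + 1) / (p + 1), by positivity, fun y hy => ?_⟩
    have key : ∀ i : ℕ, ((1 + i : ℕ) : ℝ) ^ p
        ≤ ((((i + 1) + 1 : ℕ) : ℝ) ^ (p + 1) - ((i + 1 : ℕ) : ℝ) ^ (p + 1)) / (p + 1) := by
      intro i
      have hi' : (0 : ℝ) < (i : ℝ) + 1 := by positivity
      obtain ⟨ξ, hξ1, hξ2, hξ⟩ := rpow_mvt (p + 1) hi' (by linarith : ((i : ℝ) + 1) < i + 1 + 1)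
      push_cast
      rw [hξ, show p + 1 - 1 = p by ring, show (i : ℝ) + 1 + 1 - (i + 1) = 1 by ring, mul_one,
        mul_comm (p + 1) _, mul_div_assoc, div_self hp1.ne', mul_one]
      calc ((1 : ℝ) + i) ^ p = ((i : ℝ) + 1) ^ p := by rw [add_comm]
        _ ≤ ξ ^ p := Real.rpow_le_rpow (by linarith) (by linarith) hpgt.le
    have hy1 : (1 : ℝ) ≤ (y : ℝ) := by exact_mod_cast hy
    calc ∑ n ∈ Finset.Icc 1 y, (n : ℝ) ^ p
        = ∑ i ∈ Finset.range y, ((1 + i : ℕ) : ℝ) ^ p :=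
          sum_Icc_one_eq (fun n => (n : ℝ) ^ p) y
      _ ≤ ∑ i ∈ Finset.range y, ((((i + 1) + 1 : ℕ) : ℝ) ^ (p + 1) - ((i + 1 : ℕ) : ℝ) ^ (p + 1)) / (p + 1) :=
          Finset.sum_le_sum fun i _ => key i
      _ = (∑ i ∈ Finset.range y, ((((i + 1) + 1 : ℕ) : ℝ) ^ (p + 1) - ((i + 1 : ℕ) : ℝ) ^ (p + 1))) / (p + 1) :=
          (Finset.sum_div _ _ _).symm
      _ = (((y + 1 : ℕ) : ℝ) ^ (p + 1) - ((0 + 1 : ℕ) : ℝ) ^ (p + 1)) / (p + 1) := by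
          rw [Finset.sum_range_sub (fun i : ℕ => ((i + 1 : ℕ) : ℝ) ^ (p + 1))]
      _ ≤ ((2 * y : ℝ) ^ (p + 1)) / (p + 1) := by
          gcongr
          have h1 : ((y + 1 : ℕ) : ℝ) ^ (p + 1) ≤ (2 * y : ℝ) ^ (p + 1) := by
            apply Real.rpow_le_rpow (by positivity) (by push_cast; linarith) hp1.le
          have h2 : (0 : ℝ) ≤ ((0 + 1 : ℕ) : ℝ) ^ (p + 1) := Real.rpow_nonneg (by norm_num) _
          linarith
      _ = 2 ^ (p + 1) / (p + 1) * (y : ℝ) ^ (p + 1) := by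
          rw [Real.mul_rpow (by norm_num) (by positivity)]
          ring
lemma sum_rpow_asymp (s q : ℝ) (hs : 0 < s) (hq : -1 < q) (hq2 : s - 2 ≤ q) :
    ∃ C, 0 < C ∧ ∀ y : ℕ, 1 ≤ y →
      |∑ n ∈ Finset.Icc 1 y, (n : ℝ) ^ (s - 1) - (y : ℝ) ^ s / s| ≤ C * (y : ℝ) ^ (q + 1) := by
  obtain ⟨C1, hC1, hC1'⟩ := sum_rpow_le q hq
  set K := |s - 1| * max 1 ((2:ℝ) ^ (1 - (s - 1))) with hKdef
  have hK0 : 0 ≤ K := mul_nonneg (abs_nonneg _) (le_trans zero_le_one (le_max_left _ _))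
  refine ⟨|1 - 1/s| + K * C1 + 1, by positivity, fun y hy => ?_⟩
  have hq1 : (0:ℝ) ≤ q + 1 := by linarith
  have hy1 : (1:ℝ) ≤ (y:ℝ) := by exact_mod_cast hy
  have hyq : (1:ℝ) ≤ (y:ℝ) ^ (q+1) := Real.one_le_rpow hy1 hq1
  set G : ℕ → ℝ := fun i => ((i:ℕ):ℝ) ^ s with hGdef
  set g : ℕ → ℝ := fun i => ((1 + i : ℕ):ℝ) ^ (s-1) - (G (i+1) - G i)/s with hgdef
  have eq1 : ∑ n ∈ Finset.Icc 1 y, (n : ℝ) ^ (s - 1) - (y : ℝ) ^ s / s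
      = ∑ i ∈ Finset.range y, g i := by
    have e2 : (y:ℝ) ^ s / s = (∑ i ∈ Finset.range y, (G (i+1) - G i))/s := by
      rw [Finset.sum_range_sub G]
      simp only [hGdef]
      rw [Nat.cast_zero, Real.zero_rpow hs.ne', sub_zero]
    rw [sum_Icc_one_eq (fun n => (n:ℝ)^(s-1)) y, e2, Finset.sum_div, ← Finset.sum_sub_distrib]
  have hg0 : |g 0| = |1 - 1/s| := by
    simp only [hgdef, hGdef]
    push_cast
    rw [Real.zero_rpow hs.ne']
    norm_num [Real.one_rpow]
  have hgi : ∀ i : ℕ, |g (i+1)| ≤ K * ((2 + i : ℕ):ℝ) ^ q := by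
    intro i
    have hu : (0:ℝ) < ((i:ℝ) + 1) := by positivity
    obtain ⟨ξ, hξ1, hξ2, hξ⟩ := rpow_mvt s hu (by linarith : ((i:ℝ) + 1) < (i:ℝ) + 1 + 1)
    have hGdiff : G (i+2) - G (i+1) = s * ξ ^ (s-1) := by
      simp only [hGdef]
      push_cast
      rw [show ((i:ℝ) + 2) = ((i:ℝ)+1+1) by ring, hξ]
      ring
    have hgval : g (i+1) = ((i:ℝ) + 2) ^ (s-1) - ξ ^ (s-1) := by
      simp only [hgdef]
      rw [show i + 1 + 1 = i + 2 by ring, hGdiff]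
      rw [mul_comm s _, mul_div_assoc, div_self hs.ne', mul_one]
      push_cast
      ring_nf
    have hξpos : 0 < ξ := lt_trans hu hξ1
    have happ := rpow_sub_rpow_abs_le (s-1) hξpos (le_of_lt (by linarith : ξ < (i:ℝ)+2))
      (by linarith : (i:ℝ)+2 ≤ 2 * ξ)
    rw [hgval]
    have h1 : ((i:ℝ)+2) ^ (s-1-1) ≤ ((i:ℝ)+2) ^ q :=
      Real.rpow_le_rpow_of_exponent_le (by linarith) (by linarith)
    have h2 : ((i:ℝ)+2 - ξ) ≤ 1 := by linarith
    have h3 : (0:ℝ) ≤ ((i:ℝ)+2) ^ (s-1-1) := Real.rpow_nonneg (by linarith) _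
    have h4 : (0:ℝ) ≤ ((i:ℝ)+2) ^ q := Real.rpow_nonneg (by linarith) _
    have hM : (0:ℝ) ≤ |s-1| * max 1 ((2:ℝ) ^ (1 - (s - 1))) :=
      mul_nonneg (abs_nonneg _) (le_trans zero_le_one (le_max_left _ _))
    calc |((i:ℝ) + 2) ^ (s-1) - ξ ^ (s-1)|
        ≤ |s-1| * max 1 ((2:ℝ) ^ (1 - (s - 1))) * ((i:ℝ)+2) ^ (s-1-1) * ((i:ℝ)+2 - ξ) := happ
      _ ≤ |s-1| * max 1 ((2:ℝ) ^ (1 - (s - 1))) * ((i:ℝ)+2) ^ (s-1-1) * 1 := by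
          exact mul_le_mul_of_nonneg_left h2 (mul_nonneg hM h3)
      _ = K * ((i:ℝ)+2) ^ (s-1-1) := by rw [hKdef]; ring
      _ ≤ K * ((i:ℝ)+2) ^ q := mul_le_mul_of_nonneg_left h1 hK0
      _ = K * ((2 + i : ℕ):ℝ) ^ q := by push_cast; ring_nf
  obtain ⟨z, rfl⟩ := Nat.exists_eq_add_of_le hy
  rw [eq1]
  have habs := Finset.abs_sum_le_sum_abs g (Finset.range (1 + z))
  have esplit : ∑ i ∈ Finset.range (1 + z), |g i|
      = (∑ i ∈ Finset.range z, |g (i+1)|) + |g 0| := by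
    rw [add_comm 1 z, Finset.sum_range_succ' (fun i => |g i|) z]
  have hsum2 : ∑ i ∈ Finset.range z, |g (i+1)| ≤ K * (C1 * ((1+z:ℕ):ℝ) ^ (q+1)) := by
    calc ∑ i ∈ Finset.range z, |g (i+1)| ≤ ∑ i ∈ Finset.range z, K * ((2 + i : ℕ):ℝ) ^ q :=
          Finset.sum_le_sum fun i _ => hgi i
      _ = K * ∑ i ∈ Finset.range z, ((2 + i : ℕ):ℝ) ^ q := by rw [Finset.mul_sum]
      _ ≤ K * ∑ n ∈ Finset.Icc 1 (1+z), (n:ℝ) ^ q := by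
          apply mul_le_mul_of_nonneg_left _ hK0
          rw [sum_Icc_one_eq (fun n => (n:ℝ)^q) (1+z), add_comm 1 z,
            Finset.sum_range_succ' (fun i => ((1 + i : ℕ):ℝ) ^ q) z]
          have : ∀ i ∈ Finset.range z, ((2 + i : ℕ):ℝ) ^ q = ((1 + (i+1) : ℕ):ℝ) ^ q := by
            intro i _
            push_cast
            rw [show (2 + (i:ℝ)) = 1 + ((i:ℝ)+1) by ring]
          rw [Finset.sum_congr rfl this]
          have : (0:ℝ) ≤ ((1 + 0 : ℕ):ℝ) ^ q := Real.rpow_nonneg (by positivity) _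
          linarith
      _ ≤ K * (C1 * ((1+z:ℕ):ℝ) ^ (q+1)) := by
          apply mul_le_mul_of_nonneg_left (hC1' (1+z) hy) hK0
  calc |∑ i ∈ Finset.range (1 + z), g i| ≤ ∑ i ∈ Finset.range (1 + z), |g i| := habs
    _ = (∑ i ∈ Finset.range z, |g (i+1)|) + |g 0| := esplit
    _ ≤ K * (C1 * ((1+z:ℕ):ℝ) ^ (q+1)) + |1 - 1/s| := by rw [hg0]; linarith
    _ ≤ (|1 - 1/s| + K * C1 + 1) * ((1+z:ℕ):ℝ) ^ (q+1) := by
        push_cast at hyq ⊢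
        nlinarith [abs_nonneg (1 - 1/s), mul_nonneg hK0 hC1.le]
lemma rpow_add_one_ge {c : ℝ} (hc : 1 < c) {x : ℝ} (hx : 1 ≤ x) :
    x ^ c + 1 ≤ (x + 1) ^ c := by
  have hx0 : (0:ℝ) < x := by linarith
  have h1 : 1 + c * (1/x) ≤ (1 + 1/x) ^ c :=
    one_add_mul_self_le_rpow_one_add
      (le_trans (by norm_num : (-1:ℝ) ≤ 0) (by positivity)) hc.le
  have h2 : (x+1) ^ c = x ^ c * (1 + 1/x) ^ c := by
    rw [← Real.mul_rpow hx0.le (by positivity)]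
    congr 1
    field_simp
  have h4 : x ≤ x ^ c := by
    calc x = x ^ (1:ℝ) := (Real.rpow_one _).symm
      _ ≤ x ^ c := Real.rpow_le_rpow_of_exponent_le hx hc.le
  have h7 : 1 ≤ x ^ c / x := (one_le_div hx0).mpr h4
  have h6 : x ^ c * (1 + c * (1/x)) ≤ x ^ c * (1 + 1/x) ^ c :=
    mul_le_mul_of_nonneg_left h1 (Real.rpow_nonneg hx0.le c)
  have h8 : c * 1 ≤ c * (x ^ c / x) := mul_le_mul_of_nonneg_left h7 (by linarith)
  have h9 : x ^ c * (1 + c * (1/x)) = x ^ c + c * (x ^ c / x) := by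
    field_simp
  rw [h2]
  linarith [h6, h8, h9.symm.le, h9.le]

lemma fl_ge_one {c : ℝ} (hc : 0 ≤ c) {n : ℕ} (hn : 1 ≤ n) : 1 ≤ ⌊(n:ℝ) ^ c⌋₊ := by
  apply Nat.le_floor
  have : (1:ℝ) ≤ (n:ℝ) := by exact_mod_cast hn
  have := Real.one_le_rpow this hc
  exact_mod_cast this

lemma fl_succ_gt {c : ℝ} (hc : 1 < c) {n : ℕ} (hn : 1 ≤ n) :
    ⌊(n:ℝ) ^ c⌋₊ + 1 ≤ ⌊((n+1:ℕ):ℝ) ^ c⌋₊ := by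
  have hn1 : (1:ℝ) ≤ (n:ℝ) := by exact_mod_cast hn
  have hb : (n:ℝ) ^ c + 1 ≤ ((n:ℝ) + 1) ^ c := rpow_add_one_ge hc hn1
  have h0 : (0:ℝ) ≤ (n:ℝ) ^ c := Real.rpow_nonneg (by positivity) c
  calc ⌊(n:ℝ) ^ c⌋₊ + 1 = ⌊(n:ℝ) ^ c + 1⌋₊ := (Nat.floor_add_one h0).symm
    _ ≤ ⌊((n:ℝ) + 1) ^ c⌋₊ := Nat.floor_le_floor hb
    _ = ⌊((n+1:ℕ):ℝ) ^ c⌋₊ := by push_cast; ring_nf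

lemma fl_lt_fl {c : ℝ} (hc : 1 < c) {a b : ℕ} (ha : 1 ≤ a) (hab : a < b) :
    ⌊(a:ℝ) ^ c⌋₊ < ⌊(b:ℝ) ^ c⌋₊ := by
  obtain ⟨k, rfl⟩ : ∃ k, b = a + k + 1 := ⟨b - a - 1, by omega⟩
  clear hab
  induction k with
  | zero =>
      have := fl_succ_gt hc ha
      simp only [Nat.add_zero]
      omega
  | succ k ih =>
      have h1 := fl_succ_gt hc (show 1 ≤ a + k + 1 by omega)
      have : a + (k+1) + 1 = (a + k + 1) + 1 := by omega
      rw [this]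
      omega

lemma fl_le_iff {c : ℝ} (n m : ℕ) : ⌊(n:ℝ) ^ c⌋₊ ≤ m ↔ (n:ℝ) ^ c < (m:ℝ) + 1 := by
  rw [← Nat.lt_succ_iff, Nat.floor_lt (Real.rpow_nonneg (Nat.cast_nonneg n) c)]
  push_cast
  rfl

lemma rpow_max_le {x : ℝ} (hx : 1 ≤ x) (a b : ℝ) : x ^ (max a b) ≤ x ^ a + x ^ b := by
  rcases max_cases a b with ⟨h, _⟩ | ⟨h, _⟩ <;> rw [h]
  · nlinarith [Real.rpow_nonneg (by linarith : (0:ℝ) ≤ x) b]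
  · nlinarith [Real.rpow_nonneg (by linarith : (0:ℝ) ≤ x) a]
lemma Apart_bound (c ω κ : ℝ) (hc : 1 < c) (hω : 0 < ω) (hκ : 0 < κ) :
    ∃ C, 0 < C ∧ ∀ m : ℕ, 1 ≤ m →
      |∑ j ∈ Finset.Icc 1 m, (Set.indicator (NPS c) (fun n => (n:ℝ) ^ (ω - 1/c)) j
          - 1/c * (j:ℝ) ^ (ω - 1))|
        ≤ C * (1 + (m:ℝ) ^ (ω - 1/c) + (m:ℝ) ^ (ω - 1) + (m:ℝ) ^ κ) := by
  classical
  have hc0 : (0:ℝ) < c := by linarith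
  have hc0' : c ≠ 0 := hc0.ne'
  -- step constants
  obtain ⟨CA, hCA, hCA'⟩ := sum_rpow_le (max (c*ω - 1 - c) (κ - 1))
    (lt_max_of_lt_right (by linarith))
  obtain ⟨CB, hCB, hCB'⟩ := sum_rpow_asymp (c*ω) (max (c*ω - 2) (κ - 1))
    (by positivity) (lt_max_of_lt_right (by linarith)) (le_max_of_le_left (by linarith))
  obtain ⟨CD, hCD, hCD'⟩ := sum_rpow_asymp ω (max (ω - 2) (κ - 1))
    hω (lt_max_of_lt_right (by linarith)) (le_max_of_le_left (by linarith))
  set KA : ℝ := |ω - 1/c| * max 1 ((2:ℝ) ^ (1 - (ω - 1/c))) with hKAdef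
  have hKA0 : 0 ≤ KA := mul_nonneg (abs_nonneg _) (le_trans zero_le_one (le_max_left _ _))
  set KC : ℝ := |c*ω| * max 1 ((2:ℝ) ^ (1 - c*ω)) with hKCdef
  have hKC0 : 0 ≤ KC := mul_nonneg (abs_nonneg _) (le_trans zero_le_one (le_max_left _ _))
  set m₀ : ℕ := ⌈(3:ℝ) ^ c⌉₊ + 1 with hm₀def
  set aseq : ℕ → ℝ := fun j => Set.indicator (NPS c) (fun n => (n:ℝ) ^ (ω - 1/c)) j
      - 1/c * (j:ℝ) ^ (ω - 1) with haseq
  -- main estimate for large m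
  have main : ∀ m : ℕ, m₀ ≤ m →
      |∑ j ∈ Finset.Icc 1 m, aseq j|
        ≤ (KA * CA * ((2:ℝ) ^ |c*(ω-1)| + (2:ℝ) ^ |κ|)
            + CB * ((2:ℝ) ^ |c*ω - 1| + (2:ℝ) ^ |κ|)
            + KC * (2:ℝ) ^ |c*ω - 1| / (c*ω) + CD)
          * (1 + (m:ℝ) ^ (ω - 1/c) + (m:ℝ) ^ (ω - 1) + (m:ℝ) ^ κ) := by
    intro m hm
    have hm1 : 1 ≤ m := le_trans (by omega) hm
    have hm1' : (1:ℝ) ≤ (m:ℝ) := by exact_mod_cast hm1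
    have hm0' : (0:ℝ) ≤ (m:ℝ) := by linarith
    set x : ℝ := (m:ℝ) ^ c⁻¹ with hxdef
    have hx1 : (1:ℝ) ≤ x := Real.one_le_rpow hm1' (by positivity)
    have hx3 : (3:ℝ) ≤ x := by
      have h3m : (3:ℝ) ^ c ≤ (m:ℝ) := by
        have : ((⌈(3:ℝ)^c⌉₊ : ℕ):ℝ) ≤ (m:ℝ) := by exact_mod_cast le_trans (by omega) hm
        exact le_trans (Nat.le_ceil _) this
      calc (3:ℝ) = ((3:ℝ) ^ c) ^ c⁻¹ := (Real.rpow_rpow_inv (by norm_num : (0:ℝ) ≤ 3) hc0').symm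
        _ ≤ x := Real.rpow_le_rpow (by positivity) h3m (by positivity)
    have hx0 : (0:ℝ) < x := by linarith
    -- the cutoff y
    have hcp : 0 < ⌈((m:ℝ)+1) ^ c⁻¹⌉₊ := Nat.ceil_pos.mpr (Real.rpow_pos_of_pos (by linarith) _)
    have hc2 : 1 < ⌈((m:ℝ)+1) ^ c⁻¹⌉₊ := by
      rw [Nat.lt_ceil]
      push_cast
      exact (Real.one_lt_rpow_iff_of_pos (by linarith)).mpr
        (Or.inl ⟨by linarith, by positivity⟩)
    set y : ℕ := ⌈((m:ℝ)+1) ^ c⁻¹⌉₊ - 1 with hydef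
    have hy1 : 1 ≤ y := by omega
    have hyr : (y:ℝ) = (⌈((m:ℝ)+1) ^ c⁻¹⌉₊ : ℝ) - 1 := by
      rw [hydef]
      push_cast [Nat.cast_sub (by omega : 1 ≤ ⌈((m:ℝ)+1) ^ c⁻¹⌉₊)]
      ring
    have hsub : ((m:ℝ)+1) ^ c⁻¹ ≤ x + 1 := by
      have h1 : (m:ℝ) + 1 ≤ (x + 1) ^ c := by
        have := rpow_add_one_ge hc hx1
        rwa [hxdef, Real.rpow_inv_rpow hm0' hc0'] at this
      calc ((m:ℝ)+1) ^ c⁻¹ ≤ ((x+1) ^ c) ^ c⁻¹ :=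
            Real.rpow_le_rpow (by linarith) h1 (by positivity)
        _ = x + 1 := Real.rpow_rpow_inv (by linarith) hc0'
    have hy_up : (y:ℝ) ≤ x + 1 := by
      rw [hyr]
      have := Nat.ceil_lt_add_one (le_of_lt (Real.rpow_pos_of_pos
        (by linarith : (0:ℝ) < (m:ℝ)+1) c⁻¹))
      linarith
    have hy_lo : x - 1 ≤ (y:ℝ) := by
      rw [hyr]
      have h1 := Nat.le_ceil (((m:ℝ)+1) ^ c⁻¹)
      have h2 : x ≤ ((m:ℝ)+1) ^ c⁻¹ :=
        Real.rpow_le_rpow hm0' (by linarith) (by positivity)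
      linarith
    have hy_up2 : (y:ℝ) ≤ 2 * x := by linarith
    have hy_lo2 : x / 2 ≤ (y:ℝ) := by linarith
    have hy1' : (1:ℝ) ≤ (y:ℝ) := by exact_mod_cast hy1
    -- membership
    have hmem : ∀ n : ℕ, ⌊(n:ℝ) ^ c⌋₊ ≤ m ↔ n ≤ y := by
      intro n
      rw [fl_le_iff]
      constructor
      · intro h
        have h2 : (n:ℝ) < ((m:ℝ)+1) ^ c⁻¹ :=
          (Real.lt_rpow_inv_iff_of_pos (Nat.cast_nonneg n) (by linarith) hc0).mpr h
        have h3 : n < ⌈((m:ℝ)+1) ^ c⁻¹⌉₊ := Nat.lt_ceil.mpr h2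
        omega
      · intro h
        have h3 : n < ⌈((m:ℝ)+1) ^ c⁻¹⌉₊ := by omega
        have h2 : (n:ℝ) < ((m:ℝ)+1) ^ c⁻¹ := Nat.lt_ceil.mp h3
        exact (Real.lt_rpow_inv_iff_of_pos (Nat.cast_nonneg n) (by linarith) hc0).mp h2
    -- set equality
    have hset : (Finset.Icc 1 m).filter (fun j => j ∈ NPS c)
        = (Finset.Icc 1 y).image (fun n : ℕ => ⌊(n:ℝ) ^ c⌋₊) := by
      ext j
      simp only [Finset.mem_filter, Finset.mem_image, Finset.mem_Icc, NPS, Set.mem_setOf_eq]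
      constructor
      · rintro ⟨⟨hj1, hjm⟩, n, hn1, rfl⟩
        exact ⟨n, ⟨hn1, (hmem n).mp hjm⟩, rfl⟩
      · rintro ⟨n, ⟨hn1, hny⟩, rfl⟩
        exact ⟨⟨fl_ge_one hc0.le hn1, (hmem n).mpr hny⟩, n, hn1, rfl⟩
    have hinj : ∀ a ∈ Finset.Icc 1 y, ∀ b ∈ Finset.Icc 1 y,
        ⌊(a:ℝ) ^ c⌋₊ = ⌊(b:ℝ) ^ c⌋₊ → a = b := by
      intro a ha b hb he
      simp only [Finset.mem_Icc] at ha hb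
      rcases lt_trichotomy a b with h | h | h
      · exact absurd he (Nat.ne_of_lt (fl_lt_fl hc ha.1 h))
      · exact h
      · exact absurd he.symm (Nat.ne_of_lt (fl_lt_fl hc hb.1 h))
    -- decompose
    have hsplit : ∑ j ∈ Finset.Icc 1 m, aseq j
        = (∑ n ∈ Finset.Icc 1 y, ((⌊(n:ℝ) ^ c⌋₊ : ℝ)) ^ (ω - 1/c))
          - 1/c * ∑ j ∈ Finset.Icc 1 m, (j:ℝ) ^ (ω - 1) := by
      rw [haseq, Finset.sum_sub_distrib, ← Finset.mul_sum]
      congr 1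
      have h1 : ∑ j ∈ Finset.Icc 1 m, Set.indicator (NPS c) (fun n => (n:ℝ) ^ (ω - 1/c)) j
          = ∑ j ∈ (Finset.Icc 1 m).filter (fun j => j ∈ NPS c), (j:ℝ) ^ (ω - 1/c) := by
        rw [Finset.sum_filter]
        apply Finset.sum_congr rfl
        intro j _
        simp [Set.indicator_apply]
      rw [h1, hset, Finset.sum_image hinj]
    -- basic W facts
    have hP1 : (0:ℝ) ≤ (m:ℝ) ^ (ω - 1/c) := Real.rpow_nonneg hm0' _
    have hP2 : (0:ℝ) ≤ (m:ℝ) ^ (ω - 1) := Real.rpow_nonneg hm0' _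
    have hP3 : (0:ℝ) ≤ (m:ℝ) ^ κ := Real.rpow_nonneg hm0' _
    obtain ⟨W, hWdef⟩ : ∃ W : ℝ, W = 1 + (m:ℝ) ^ (ω - 1/c) + (m:ℝ) ^ (ω - 1) + (m:ℝ) ^ κ :=
      ⟨_, rfl⟩
    have hW1 : (1:ℝ) ≤ W := by rw [hWdef]; linarith
    have hW0 : (0:ℝ) ≤ W := by linarith
    have hWc1 : (m:ℝ) ^ (ω - 1/c) ≤ W := by rw [hWdef]; linarith
    have hWc2 : (m:ℝ) ^ (ω - 1) ≤ W := by rw [hWdef]; linarith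
    have hWc3 : (m:ℝ) ^ κ ≤ W := by rw [hWdef]; linarith
    have hcinv1 : c⁻¹ ≤ 1 := by
      have h1 : c * c⁻¹ = 1 := mul_inv_cancel₀ hc0'
      nlinarith [inv_pos.mpr hc0]
    -- conversion: powers of y to powers of m
    have hyconv : ∀ p r : ℝ, c⁻¹ * p = r → (y:ℝ) ^ p ≤ 2 ^ |p| * (m:ℝ) ^ r := by
      intro p r hpr
      have h := rpow_comparable p hx0 hy_lo2 hy_up2
      rwa [hxdef, ← Real.rpow_mul hm0', hpr] at h
    -- Step A
    have stepA : |(∑ n ∈ Finset.Icc 1 y, ((⌊(n:ℝ) ^ c⌋₊ : ℝ)) ^ (ω - 1/c))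
        - ∑ n ∈ Finset.Icc 1 y, (n:ℝ) ^ (c*ω - 1)|
        ≤ KA * (CA * (y:ℝ) ^ (max (c*ω - 1 - c) (κ - 1) + 1)) := by
      rw [← Finset.sum_sub_distrib]
      apply (Finset.abs_sum_le_sum_abs _ _).trans
      have hterm : ∀ n ∈ Finset.Icc 1 y,
          |((⌊(n:ℝ) ^ c⌋₊ : ℝ)) ^ (ω - 1/c) - (n:ℝ) ^ (c*ω - 1)|
            ≤ KA * (n:ℝ) ^ (max (c*ω - 1 - c) (κ - 1)) := by
        intro n hn
        rw [Finset.mem_Icc] at hn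
        have hn1' : (1:ℝ) ≤ (n:ℝ) := by exact_mod_cast hn.1
        have hn0'' : (0:ℝ) ≤ (n:ℝ) := by linarith
        have hfl1 : (1:ℝ) ≤ ((⌊(n:ℝ) ^ c⌋₊ : ℕ):ℝ) := by exact_mod_cast fl_ge_one hc0.le hn.1
        have hflle : ((⌊(n:ℝ) ^ c⌋₊ : ℕ):ℝ) ≤ (n:ℝ) ^ c := Nat.floor_le (Real.rpow_nonneg hn0'' c)
        have hfllt : (n:ℝ) ^ c < ((⌊(n:ℝ) ^ c⌋₊ : ℕ):ℝ) + 1 := Nat.lt_floor_add_one _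
        have h2 : (n:ℝ) ^ c ≤ 2 * ((⌊(n:ℝ) ^ c⌋₊ : ℕ):ℝ) := by linarith
        have key := rpow_sub_rpow_abs_le (ω - 1/c)
          (lt_of_lt_of_le zero_lt_one hfl1) hflle h2
        have hee : (n:ℝ) ^ (c*ω - 1) = ((n:ℝ) ^ c) ^ (ω - 1/c) := by
          rw [← Real.rpow_mul hn0'']
          congr 1
          field_simp
        rw [hee, abs_sub_comm]
        apply key.trans
        have hXle : ((n:ℝ) ^ c) ^ (ω - 1/c - 1) ≤ (n:ℝ) ^ (max (c*ω - 1 - c) (κ - 1)) := by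
          rw [← Real.rpow_mul hn0'']
          apply Real.rpow_le_rpow_of_exponent_le hn1'
          apply le_max_of_le_left
          have : c * (ω - 1/c - 1) = c*ω - 1 - c := by field_simp
          linarith [this.le, this.ge]
        have hd1 : (n:ℝ) ^ c - ((⌊(n:ℝ) ^ c⌋₊ : ℕ):ℝ) ≤ 1 := by linarith
        have hM0 : (0:ℝ) ≤ |ω - 1/c| * max 1 ((2:ℝ) ^ (1 - (ω - 1/c))) :=
          mul_nonneg (abs_nonneg _) (le_trans zero_le_one (le_max_left _ _))
        have hX0 : (0:ℝ) ≤ ((n:ℝ) ^ c) ^ (ω - 1/c - 1) :=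
          Real.rpow_nonneg (Real.rpow_nonneg hn0'' c) _
        calc |ω - 1/c| * max 1 ((2:ℝ) ^ (1 - (ω - 1/c))) * ((n:ℝ) ^ c) ^ (ω - 1/c - 1)
              * ((n:ℝ) ^ c - ((⌊(n:ℝ) ^ c⌋₊ : ℕ):ℝ))
            ≤ |ω - 1/c| * max 1 ((2:ℝ) ^ (1 - (ω - 1/c))) * ((n:ℝ) ^ c) ^ (ω - 1/c - 1) * 1 :=
              mul_le_mul_of_nonneg_left hd1 (mul_nonneg hM0 hX0)
          _ = KA * ((n:ℝ) ^ c) ^ (ω - 1/c - 1) := by rw [hKAdef]; ring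
          _ ≤ KA * (n:ℝ) ^ (max (c*ω - 1 - c) (κ - 1)) :=
              mul_le_mul_of_nonneg_left hXle hKA0
      calc ∑ n ∈ Finset.Icc 1 y, |((⌊(n:ℝ) ^ c⌋₊ : ℝ)) ^ (ω - 1/c) - (n:ℝ) ^ (c*ω - 1)|
          ≤ ∑ n ∈ Finset.Icc 1 y, KA * (n:ℝ) ^ (max (c*ω - 1 - c) (κ - 1)) :=
            Finset.sum_le_sum hterm
        _ = KA * ∑ n ∈ Finset.Icc 1 y, (n:ℝ) ^ (max (c*ω - 1 - c) (κ - 1)) := by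
            rw [Finset.mul_sum]
        _ ≤ KA * (CA * (y:ℝ) ^ (max (c*ω - 1 - c) (κ - 1) + 1)) :=
            mul_le_mul_of_nonneg_left (hCA' y hy1) hKA0
    -- Step B
    have stepB := hCB' y hy1
    -- Step C
    have hxm : x ^ (c*ω) = (m:ℝ) ^ ω := by
      rw [hxdef, ← Real.rpow_mul hm0']
      congr 1
      field_simp
    have hexp : x ^ (c*ω - 1) = (m:ℝ) ^ (ω - 1/c) := by
      rw [hxdef, ← Real.rpow_mul hm0']
      congr 1
      field_simp
    have h2KC : (1:ℝ) ≤ (2:ℝ) ^ |c*ω - 1| :=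
      Real.one_le_rpow (by norm_num) (abs_nonneg _)
    have stepC : |(y:ℝ) ^ (c*ω) - (m:ℝ) ^ ω|
        ≤ KC * (2:ℝ) ^ |c*ω - 1| * (m:ℝ) ^ (ω - 1/c) := by
      rcases le_total (y:ℝ) x with hyx | hxy
      · have key := rpow_sub_rpow_abs_le (c*ω) (show (0:ℝ) < (y:ℝ) by linarith) hyx
          (by linarith)
        rw [← hxm, abs_sub_comm]
        apply key.trans
        rw [← hKCdef]
        have hd1 : x - (y:ℝ) ≤ 1 := by linarith
        have hX0 : (0:ℝ) ≤ x ^ (c*ω - 1) := Real.rpow_nonneg hx0.le _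
        calc KC * x ^ (c*ω - 1) * (x - (y:ℝ)) ≤ KC * x ^ (c*ω - 1) * 1 :=
              mul_le_mul_of_nonneg_left hd1 (mul_nonneg hKC0 hX0)
          _ = KC * x ^ (c*ω - 1) := mul_one _
          _ ≤ KC * (2:ℝ) ^ |c*ω - 1| * (m:ℝ) ^ (ω - 1/c) := by
              rw [← hexp]
              calc KC * x ^ (c*ω - 1) = KC * (1 * x ^ (c*ω - 1)) := by ring
                _ ≤ KC * ((2:ℝ) ^ |c*ω - 1| * x ^ (c*ω - 1)) :=
                    mul_le_mul_of_nonneg_left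
                      (mul_le_mul_of_nonneg_right h2KC hX0) hKC0
                _ = KC * (2:ℝ) ^ |c*ω - 1| * x ^ (c*ω - 1) := by ring
      · have key := rpow_sub_rpow_abs_le (c*ω) hx0 hxy (by linarith)
        rw [← hxm]
        apply key.trans
        rw [← hKCdef]
        have hd1 : (y:ℝ) - x ≤ 1 := by linarith
        have hycomp : (y:ℝ) ^ (c*ω - 1) ≤ (2:ℝ) ^ |c*ω - 1| * x ^ (c*ω - 1) :=
          rpow_comparable _ hx0 hy_lo2 hy_up2
        have hY0 : (0:ℝ) ≤ (y:ℝ) ^ (c*ω - 1) := Real.rpow_nonneg (by linarith) _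
        calc KC * (y:ℝ) ^ (c*ω - 1) * ((y:ℝ) - x) ≤ KC * (y:ℝ) ^ (c*ω - 1) * 1 :=
              mul_le_mul_of_nonneg_left hd1 (mul_nonneg hKC0 hY0)
          _ = KC * (y:ℝ) ^ (c*ω - 1) := mul_one _
          _ ≤ KC * ((2:ℝ) ^ |c*ω - 1| * x ^ (c*ω - 1)) :=
              mul_le_mul_of_nonneg_left hycomp hKC0
          _ = KC * (2:ℝ) ^ |c*ω - 1| * (m:ℝ) ^ (ω - 1/c) := by rw [← hexp]; ring
    -- Step D
    have stepD := hCD' m hm1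
    -- convert y powers
    have hyA : (y:ℝ) ^ (max (c*ω - 1 - c) (κ - 1) + 1)
        ≤ (2:ℝ) ^ |c*(ω-1)| * (m:ℝ) ^ (ω - 1) + (2:ℝ) ^ |κ| * (m:ℝ) ^ κ := by
      rw [show max (c*ω - 1 - c) (κ - 1) + 1 = max (c*(ω-1)) κ by
        rw [← max_add_add_right (c*ω - 1 - c) (κ - 1) 1,
          show c*ω - 1 - c + 1 = c*(ω-1) by ring, show κ - 1 + 1 = κ by ring]]
      apply (rpow_max_le hy1' _ _).trans
      apply add_le_add
      · exact hyconv (c*(ω-1)) (ω - 1) (by field_simp)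
      · apply (hyconv κ (c⁻¹ * κ) rfl).trans
        apply mul_le_mul_of_nonneg_left _ (Real.rpow_nonneg (by norm_num) _)
        apply Real.rpow_le_rpow_of_exponent_le hm1'
        calc c⁻¹ * κ ≤ 1 * κ := mul_le_mul_of_nonneg_right hcinv1 hκ.le
          _ = κ := one_mul κ
    have hyB : (y:ℝ) ^ (max (c*ω - 2) (κ - 1) + 1)
        ≤ (2:ℝ) ^ |c*ω - 1| * (m:ℝ) ^ (ω - 1/c) + (2:ℝ) ^ |κ| * (m:ℝ) ^ κ := by
      rw [show max (c*ω - 2) (κ - 1) + 1 = max (c*ω - 1) κ by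
        rw [← max_add_add_right (c*ω - 2) (κ - 1) 1,
          show c*ω - 2 + 1 = c*ω - 1 by ring, show κ - 1 + 1 = κ by ring]]
      apply (rpow_max_le hy1' _ _).trans
      apply add_le_add
      · exact hyconv (c*ω - 1) (ω - 1/c) (by field_simp)
      · apply (hyconv κ (c⁻¹ * κ) rfl).trans
        apply mul_le_mul_of_nonneg_left _ (Real.rpow_nonneg (by norm_num) _)
        apply Real.rpow_le_rpow_of_exponent_le hm1'
        calc c⁻¹ * κ ≤ 1 * κ := mul_le_mul_of_nonneg_right hcinv1 hκ.le
          _ = κ := one_mul κ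
    have hmD : (m:ℝ) ^ (max (ω - 2) (κ - 1) + 1) ≤ (m:ℝ) ^ (ω - 1) + (m:ℝ) ^ κ := by
      rw [show max (ω - 2) (κ - 1) + 1 = max (ω - 1) κ by
        rw [← max_add_add_right (ω - 2) (κ - 1) 1,
          show ω - 2 + 1 = ω - 1 by ring, show κ - 1 + 1 = κ by ring]]
      exact rpow_max_le hm1' _ _
    -- assembly
    obtain ⟨P, hPdef⟩ : ∃ P : ℝ, P = ∑ n ∈ Finset.Icc 1 y, ((⌊(n:ℝ) ^ c⌋₊ : ℝ)) ^ (ω - 1/c) :=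
      ⟨_, rfl⟩
    obtain ⟨Q, hQdef⟩ : ∃ Q : ℝ, Q = ∑ n ∈ Finset.Icc 1 y, (n:ℝ) ^ (c*ω - 1) := ⟨_, rfl⟩
    obtain ⟨S2, hS2def⟩ : ∃ S2 : ℝ, S2 = ∑ j ∈ Finset.Icc 1 m, (j:ℝ) ^ (ω - 1) := ⟨_, rfl⟩
    have hcω : (0:ℝ) < c*ω := by positivity
    have decomp : ∑ j ∈ Finset.Icc 1 m, aseq j
        = (P - Q) + (Q - (y:ℝ) ^ (c*ω) / (c*ω)) + ((y:ℝ) ^ (c*ω) - (m:ℝ) ^ ω) / (c*ω)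
          + (1/c) * ((m:ℝ) ^ ω / ω - S2) := by
      rw [hsplit, hPdef, hQdef, hS2def]
      field_simp
      ring
    have e1 : |(P - Q) + (Q - (y:ℝ) ^ (c*ω) / (c*ω)) + ((y:ℝ) ^ (c*ω) - (m:ℝ) ^ ω) / (c*ω)
          + (1/c) * ((m:ℝ) ^ ω / ω - S2)|
        ≤ |P - Q| + |Q - (y:ℝ) ^ (c*ω) / (c*ω)| + |(y:ℝ) ^ (c*ω) - (m:ℝ) ^ ω| / (c*ω)
          + |S2 - (m:ℝ) ^ ω / ω| := by
      have t1 := abs_add_le ((P - Q) + (Q - (y:ℝ) ^ (c*ω) / (c*ω))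
        + ((y:ℝ) ^ (c*ω) - (m:ℝ) ^ ω) / (c*ω)) ((1/c) * ((m:ℝ) ^ ω / ω - S2))
      have t2 := abs_add_le ((P - Q) + (Q - (y:ℝ) ^ (c*ω) / (c*ω)))
        (((y:ℝ) ^ (c*ω) - (m:ℝ) ^ ω) / (c*ω))
      have t3 := abs_add_le (P - Q) (Q - (y:ℝ) ^ (c*ω) / (c*ω))
      have t4 : |((y:ℝ) ^ (c*ω) - (m:ℝ) ^ ω) / (c*ω)|
          = |(y:ℝ) ^ (c*ω) - (m:ℝ) ^ ω| / (c*ω) := by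
        rw [abs_div, abs_of_pos hcω]
      have t5 : |(1/c) * ((m:ℝ) ^ ω / ω - S2)| ≤ |S2 - (m:ℝ) ^ ω / ω| := by
        rw [abs_mul, abs_sub_comm, abs_of_pos (by positivity : (0:ℝ) < 1/c)]
        exact mul_le_of_le_one_left (abs_nonneg _)
          (by rw [div_le_one hc0]; linarith only [hc])
      rw [t4] at t2
      linarith only [t1, t2, t3, t5]
    -- final numeric assembly
    have hA2 : |P - Q| ≤ KA * CA * ((2:ℝ) ^ |c*(ω-1)| + (2:ℝ) ^ |κ|) * W := by
      rw [hPdef, hQdef]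
      apply stepA.trans
      have h1 : (y:ℝ) ^ (max (c*ω - 1 - c) (κ - 1) + 1)
          ≤ ((2:ℝ) ^ |c*(ω-1)| + (2:ℝ) ^ |κ|) * W := by
        apply hyA.trans
        have q1 : (0:ℝ) ≤ (2:ℝ) ^ |c*(ω-1)| := Real.rpow_nonneg (by norm_num) _
        have q2 : (0:ℝ) ≤ (2:ℝ) ^ |κ| := Real.rpow_nonneg (by norm_num) _
        linarith only [mul_le_mul_of_nonneg_left hWc2 q1, mul_le_mul_of_nonneg_left hWc3 q2]
      calc KA * (CA * (y:ℝ) ^ (max (c*ω - 1 - c) (κ - 1) + 1))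
          ≤ KA * (CA * (((2:ℝ) ^ |c*(ω-1)| + (2:ℝ) ^ |κ|) * W)) := by
            apply mul_le_mul_of_nonneg_left _ hKA0
            exact mul_le_mul_of_nonneg_left h1 hCA.le
        _ = KA * CA * ((2:ℝ) ^ |c*(ω-1)| + (2:ℝ) ^ |κ|) * W := by ring
    have hB2 : |Q - (y:ℝ) ^ (c*ω) / (c*ω)| ≤ CB * ((2:ℝ) ^ |c*ω - 1| + (2:ℝ) ^ |κ|) * W := by
      rw [hQdef]
      apply stepB.trans
      have h1 : (y:ℝ) ^ (max (c*ω - 2) (κ - 1) + 1)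
          ≤ ((2:ℝ) ^ |c*ω - 1| + (2:ℝ) ^ |κ|) * W := by
        apply hyB.trans
        have q1 : (0:ℝ) ≤ (2:ℝ) ^ |c*ω - 1| := Real.rpow_nonneg (by norm_num) _
        have q2 : (0:ℝ) ≤ (2:ℝ) ^ |κ| := Real.rpow_nonneg (by norm_num) _
        linarith only [mul_le_mul_of_nonneg_left hWc1 q1, mul_le_mul_of_nonneg_left hWc3 q2]
      calc CB * (y:ℝ) ^ (max (c*ω - 2) (κ - 1) + 1)
          ≤ CB * (((2:ℝ) ^ |c*ω - 1| + (2:ℝ) ^ |κ|) * W) :=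
            mul_le_mul_of_nonneg_left h1 hCB.le
        _ = CB * ((2:ℝ) ^ |c*ω - 1| + (2:ℝ) ^ |κ|) * W := by ring
    have hC2 : |(y:ℝ) ^ (c*ω) - (m:ℝ) ^ ω| / (c*ω) ≤ KC * (2:ℝ) ^ |c*ω - 1| / (c*ω) * W := by
      have h2' : KC * (2:ℝ) ^ |c*ω - 1| * (m:ℝ) ^ (ω - 1/c) ≤ KC * (2:ℝ) ^ |c*ω - 1| * W :=
        mul_le_mul_of_nonneg_left hWc1
          (mul_nonneg hKC0 (Real.rpow_nonneg (by norm_num) _))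
      calc |(y:ℝ) ^ (c*ω) - (m:ℝ) ^ ω| / (c*ω)
          = |(y:ℝ) ^ (c*ω) - (m:ℝ) ^ ω| * (c*ω)⁻¹ := div_eq_mul_inv _ _
        _ ≤ (KC * (2:ℝ) ^ |c*ω - 1| * W) * (c*ω)⁻¹ :=
            mul_le_mul_of_nonneg_right (stepC.trans h2') (inv_nonneg.mpr hcω.le)
        _ = KC * (2:ℝ) ^ |c*ω - 1| / (c*ω) * W := by ring
    have hD2 : |S2 - (m:ℝ) ^ ω / ω| ≤ CD * W := by
      rw [hS2def]
      apply stepD.trans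
      have h1 : (m:ℝ) ^ (max (ω - 2) (κ - 1) + 1) ≤ W := by
        apply hmD.trans
        rw [hWdef]
        linarith
      exact (mul_le_mul_of_nonneg_left h1 hCD.le).trans_eq rfl
    rw [decomp, ← hWdef]
    apply e1.trans
    linarith only [hA2, hB2, hC2, hD2]
  -- assemble final constant, covering small m
  have q1 : (0:ℝ) ≤ (2:ℝ) ^ |c*(ω-1)| := Real.rpow_nonneg (by norm_num) _
  have q2 : (0:ℝ) ≤ (2:ℝ) ^ |κ| := Real.rpow_nonneg (by norm_num) _
  have q3 : (0:ℝ) ≤ (2:ℝ) ^ |c*ω - 1| := Real.rpow_nonneg (by norm_num) _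
  have hbig0 : 0 ≤ KA * CA * ((2:ℝ) ^ |c*(ω-1)| + (2:ℝ) ^ |κ|)
      + CB * ((2:ℝ) ^ |c*ω - 1| + (2:ℝ) ^ |κ|)
      + KC * (2:ℝ) ^ |c*ω - 1| / (c*ω) + CD := by
    have hA := mul_nonneg (mul_nonneg hKA0 hCA.le) (add_nonneg q1 q2)
    have hB := mul_nonneg hCB.le (add_nonneg q3 q2)
    have hC := div_nonneg (mul_nonneg hKC0 q3) (mul_pos hc0 hω).le
    linarith only [hA, hB, hC, hCD]
  obtain ⟨D0, hD0⟩ : ∃ D0 : ℝ, D0 = ∑ j ∈ Finset.Icc 1 m₀, |aseq j| := ⟨_, rfl⟩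
  have hD00 : 0 ≤ D0 := by
    rw [hD0]
    exact Finset.sum_nonneg fun j _ => abs_nonneg _
  refine ⟨KA * CA * ((2:ℝ) ^ |c*(ω-1)| + (2:ℝ) ^ |κ|)
      + CB * ((2:ℝ) ^ |c*ω - 1| + (2:ℝ) ^ |κ|)
      + KC * (2:ℝ) ^ |c*ω - 1| / (c*ω) + CD + D0 + 1, by linarith only [hbig0, hD00],
      fun m hm1 => ?_⟩
  have hm0' : (0:ℝ) ≤ (m:ℝ) := Nat.cast_nonneg m
  have hP1 : (0:ℝ) ≤ (m:ℝ) ^ (ω - 1/c) := Real.rpow_nonneg hm0' _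
  have hP2 : (0:ℝ) ≤ (m:ℝ) ^ (ω - 1) := Real.rpow_nonneg hm0' _
  have hP3 : (0:ℝ) ≤ (m:ℝ) ^ κ := Real.rpow_nonneg hm0' _
  have hW1 : (1:ℝ) ≤ 1 + (m:ℝ) ^ (ω - 1/c) + (m:ℝ) ^ (ω - 1) + (m:ℝ) ^ κ := by
    linarith only [hP1, hP2, hP3]
  rcases le_or_gt m₀ m with hcase | hcase
  · apply (main m hcase).trans
    apply mul_le_mul_of_nonneg_right _ (by linarith only [hW1])
    linarith only [hD00]
  · have hs1 : |∑ j ∈ Finset.Icc 1 m, aseq j| ≤ D0 := by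
      rw [hD0]
      apply (Finset.abs_sum_le_sum_abs _ _).trans
      exact Finset.sum_le_sum_of_subset_of_nonneg
        (Finset.Icc_subset_Icc_right hcase.le) (fun j _ _ => abs_nonneg _)
    apply hs1.trans
    have h2 := mul_le_mul_of_nonneg_left hW1 (by linarith only [hbig0, hD00] :
      (0:ℝ) ≤ KA * CA * ((2:ℝ) ^ |c*(ω-1)| + (2:ℝ) ^ |κ|)
        + CB * ((2:ℝ) ^ |c*ω - 1| + (2:ℝ) ^ |κ|)
        + KC * (2:ℝ) ^ |c*ω - 1| / (c*ω) + CD + D0 + 1)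
    rw [mul_one] at h2
    linarith only [h2, hbig0]

lemma eR_nat_mul (α : ℝ) (n : ℕ) : eR ((n:ℝ) * α) = (eR α) ^ n := by
  rw [eR, eR, ← Complex.exp_nat_mul]
  congr 1
  push_cast
  ring

lemma eR_abs (θ : ℝ) : ‖eR θ‖ = 1 := by
  rw [eR, show (2*(Real.pi:ℂ)*Complex.I*(θ:ℂ)) = ((2*Real.pi*θ : ℝ):ℂ) * Complex.I by
    push_cast; ring]
  exact Complex.norm_exp_ofReal_mul_I _

lemma eR_int (k : ℤ) : eR ((k:ℤ):ℝ) = 1 := by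
  rw [eR, show (2*(Real.pi:ℂ)*Complex.I*(((k:ℤ):ℝ):ℂ)) = (k:ℂ) * (2*Real.pi*Complex.I) by
    push_cast; ring]
  exact Complex.exp_int_mul_two_pi_mul_I k

lemma eR_add (a b : ℝ) : eR (a + b) = eR a * eR b := by
  rw [eR, eR, eR, ← Complex.exp_add]
  congr 1
  push_cast
  ring

lemma eR_sub_one_bound (α : ℝ) (h : 2 * Real.pi * distInt α ≤ 1) :
    ‖eR α - 1‖ ≤ 4 * Real.pi * distInt α := by
  have hper : eR α = eR (α - round α) := by
    have e1 : α = (α - round α) + ((round α : ℤ):ℝ) := by ring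
    rw [show eR α = eR ((α - round α) + ((round α : ℤ):ℝ)) from by rw [← e1]]
    rw [eR_add, eR_int, mul_one]
  rw [hper]
  have hd : |α - (round α : ℝ)| = distInt α := rfl
  have hx : ‖2 * (Real.pi:ℂ) * Complex.I * ((α - (round α : ℝ)):ℂ)‖
      = 2 * Real.pi * distInt α := by
    rw [show (2*(Real.pi:ℂ)*Complex.I*((α - (round α : ℝ)):ℂ))
        = ((2*Real.pi*(α - (round α : ℝ)) : ℝ):ℂ) * Complex.I by push_cast; ring]
    rw [norm_mul, Complex.norm_I, mul_one, Complex.norm_real, Real.norm_eq_abs, abs_mul, abs_mul, ← hd]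
    rw [abs_of_nonneg (by norm_num : (0:ℝ) ≤ 2), abs_of_nonneg Real.pi_pos.le]
  have hb := Complex.norm_exp_sub_one_le (x := 2 * (Real.pi:ℂ) * Complex.I
    * ((α - (round α : ℝ)):ℂ)) (by rw [hx]; exact h)
  rw [eR]
  push_cast
  apply le_trans hb
  rw [hx]
  linarith [abs_nonneg (α - (round α : ℝ)), Real.pi_pos,
    mul_nonneg (mul_nonneg (by norm_num : (0:ℝ) ≤ 2) Real.pi_pos.le) (abs_nonneg (α - (round α:ℝ)))]

lemma abel_sum (B : ℕ → ℂ) (hB0 : B 0 = 0) (w : ℂ) (M : ℕ) :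
    ∑ j ∈ Finset.Icc 1 M, (B j - B (j-1)) * w ^ j
      = B M * w ^ M + ∑ j ∈ Finset.Icc 1 (M-1), B j * (w ^ j - w ^ (j+1)) := by
  induction M with
  | zero => simp [hB0]
  | succ M ih =>
      rw [Finset.sum_Icc_succ_top (by omega : 1 ≤ M+1) (fun j => (B j - B (j-1)) * w ^ j), ih]
      rcases Nat.eq_zero_or_pos M with rfl | hM
      · simp [hB0]
      · have hM1 : M - 1 + 1 = M := by omega
        have e2 : ∑ j ∈ Finset.Icc 1 (M+1-1), B j * (w^j - w^(j+1))
            = ∑ j ∈ Finset.Icc 1 (M-1), B j * (w^j - w^(j+1)) + B M * (w^M - w^(M+1)) := by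
          rw [show M+1-1 = M by omega, ← hM1,
            Finset.sum_Icc_succ_top (by omega : 1 ≤ M-1+1) (fun j => B j * (w^j - w^(j+1))),
            hM1]
        rw [e2, show M+1-1 = M by omega]
        ring

lemma abel_bound (B : ℕ → ℂ) (hB0 : B 0 = 0) {w : ℂ} (hw : ‖w‖ = 1) {ε K : ℝ}
    (hε : ‖1 - w‖ ≤ ε) (M : ℕ) (hK : ∀ j, j ≤ M → ‖B j‖ ≤ K) :
    ‖∑ j ∈ Finset.Icc 1 M, (B j - B (j-1)) * w ^ j‖ ≤ K * (1 + M * ε) := by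
  have hK0 : 0 ≤ K := le_trans (norm_nonneg _) (hK 0 (Nat.zero_le M))
  have hε0 : 0 ≤ ε := le_trans (norm_nonneg _) hε
  rw [abel_sum B hB0 w M]
  apply le_trans (norm_add_le _ _)
  have h1 : ‖B M * w ^ M‖ ≤ K := by
    rw [norm_mul, norm_pow, hw, one_pow, mul_one]
    exact hK M le_rfl
  have h2 : ‖∑ j ∈ Finset.Icc 1 (M-1), B j * (w^j - w^(j+1))‖
      ≤ ((M-1 : ℕ):ℝ) * (K * ε) := by
    apply le_trans (norm_sum_le _ _)
    have hterm : ∀ j ∈ Finset.Icc 1 (M-1), ‖B j * (w^j - w^(j+1))‖ ≤ K * ε := by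
      intro j hj
      rw [Finset.mem_Icc] at hj
      have e1 : w^j - w^(j+1) = w^j * (1 - w) := by ring
      rw [norm_mul, e1, norm_mul, norm_pow, hw, one_pow, one_mul]
      apply mul_le_mul (hK j (by omega)) hε (norm_nonneg _) hK0
    apply le_trans (Finset.sum_le_sum hterm)
    rw [Finset.sum_const, Nat.card_Icc]
    simp only [nsmul_eq_mul]
    exact le_of_eq (by norm_num)
  have hMc : ((M-1:ℕ):ℝ) ≤ (M:ℝ) := by exact_mod_cast Nat.sub_le M 1
  have hKε : 0 ≤ K * ε := mul_nonneg hK0 hε0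
  nlinarith [h1, h2, mul_le_mul_of_nonneg_right hMc hKε]

/-- Major arc approximation of `T` and `T^♯` by `U` and `U^♯`. -/
theorem stmt5 (c : ℝ) (hc1 : 1 < c) (hcni : ∀ m : ℤ, c ≠ (m : ℝ))
    (h : ℕ) (hh : (h : ℝ) ≥ 2 * H0c c + 1)
    (δ : ℝ) (hδ0 : 0 < δ)
    (hδ : δ < ((h : ℝ) - 2 * H0c c) / (2 * h * (h - 1) * H0c c))
    (ω : ℝ) (hω : ω ≥ 1 / h - δ)
    (ν : ℝ) (hν0 : 0 < ν) (hν : ν < (1 / 3) * min (1 / c) (1 / h - δ)) :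
    ∃ C > (0:ℝ), ∀ᶠ N : ℕ in Filter.atTop, ∀ α ∈ MajorArc ν N,
      ‖(Tc c ω α (N : ℝ) - (1 / c) * Uc ω α (N : ℝ))‖
          ≤ C * (N : ℝ) ^ (ω - 2 * ν) ∧
      ‖(TcSharp c ω h α (N : ℝ) - (1 / c) * UcSharp ω h α (N : ℝ))‖
          ≤ C * (N : ℝ) ^ (ω - 2 * ν) := by
  classical
  have hc0 : (0:ℝ) < c := by linarith
  have hπ := Real.pi_pos
  have hH2 : (2:ℝ) ≤ H0c c := by
    rw [H0c]
    split_ifs with hlt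
    · norm_num
    · push_neg at hlt
      have h4 : (4:ℤ) ≤ ⌊2*c⌋ := by
        rw [Int.le_floor]; push_cast; linarith
      have h4' : (4:ℝ) ≤ ((⌊2*c⌋:ℤ):ℝ) := by exact_mod_cast h4
      nlinarith
  have hh5 : (5:ℝ) ≤ (h:ℝ) := by linarith
  have hh1 : 1 ≤ h := by exact_mod_cast (le_trans (by norm_num) hh5 : (1:ℝ) ≤ (h:ℝ))
  have hνmin : 3*ν < min (1/c) (1/(h:ℝ) - δ) := by linarith
  have h3ν1 : 3*ν < 1/c := lt_of_lt_of_le hνmin (min_le_left _ _)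
  have h3νω : 3*ν < ω := lt_of_lt_of_le hνmin (le_trans (min_le_right _ _) hω)
  have hω0 : (0:ℝ) < ω := by linarith
  have hc1inv : 1/c < 1 := by rw [div_lt_one hc0]; exact hc1
  have hν1 : ν < 1 := by linarith
  obtain ⟨C₀, hC₀, hC₀'⟩ := Apart_bound c ω (ω - 3*ν) hc1 hω0 (by linarith)
  refine ⟨8*C₀*(1 + 4*Real.pi) + 1, by nlinarith, ?_⟩
  have hev2 : ∀ᶠ N : ℕ in Filter.atTop, ((N:ℝ))^(ν-1) ≤ 1/(2*Real.pi) := by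
    have t := (tendsto_rpow_neg_atTop (by linarith : (0:ℝ) < 1 - ν)).comp
      (tendsto_natCast_atTop_atTop (R := ℝ))
    have h2 := t.eventually (eventually_le_nhds (by positivity : (0:ℝ) < 1/(2*Real.pi)))
    filter_upwards [h2] with N hN
    rw [show ν - 1 = -(1-ν) by ring]
    exact hN
  filter_upwards [Filter.eventually_ge_atTop 1, hev2] with N hN1 hN2
  have hN0 : (0:ℝ) < (N:ℝ) := by exact_mod_cast Nat.pos_of_ne_zero (by omega)
  have hN1' : (1:ℝ) ≤ (N:ℝ) := by exact_mod_cast hN1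
  have hεNform : (N:ℝ)^ν / (N:ℝ) = (N:ℝ)^(ν-1) := by
    rw [Real.rpow_sub hN0, Real.rpow_one]
  intro α hα
  obtain ⟨hαI, hαd⟩ := hα
  have hd0 : 0 ≤ distInt α := abs_nonneg _
  have hdN : distInt α ≤ (N:ℝ)^(ν-1) := by rw [← hεNform]; exact hαd
  have hsmall : 2*Real.pi*distInt α ≤ 1 := by
    have h2 : 2*Real.pi*distInt α ≤ 2*Real.pi*((N:ℝ)^(ν-1)) := by nlinarith
    have h3 : 2*Real.pi*((N:ℝ)^(ν-1)) ≤ 2*Real.pi*(1/(2*Real.pi)) := by nlinarith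
    have h4 : 2*Real.pi*(1/(2*Real.pi)) = 1 := by field_simp
    linarith
  have hεb : ‖1 - eR α‖ ≤ 4*Real.pi*((N:ℝ)^ν/(N:ℝ)) := by
    rw [show (1 - eR α) = -(eR α - 1) by ring, norm_neg]
    apply (eR_sub_one_bound α hsmall).trans
    rw [hεNform]
    nlinarith
  obtain ⟨A, hA⟩ : ∃ A : ℕ → ℝ, A = fun M => ∑ j ∈ Finset.Icc 1 M,
      (Set.indicator (NPS c) (fun n => (n:ℝ)^(ω - 1/c)) j - 1/c*(j:ℝ)^(ω-1)) := ⟨_, rfl⟩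
  have hA0 : A 0 = 0 := by rw [hA]; simp
  have hstep : ∀ j : ℕ, 1 ≤ j → A j - A (j-1)
      = Set.indicator (NPS c) (fun n => (n:ℝ)^(ω - 1/c)) j - 1/c*(j:ℝ)^(ω-1) := by
    intro j hj
    obtain ⟨k, rfl⟩ := Nat.exists_eq_add_of_le hj
    rw [hA]
    simp only []
    rw [show 1 + k - 1 = k by omega, show 1 + k = k + 1 by omega,
      Finset.sum_Icc_succ_top (by omega : 1 ≤ k+1)]
    ring
  have hpow : ∀ e : ℝ, e ≤ ω - 3*ν → ∀ j : ℕ, 1 ≤ j → j ≤ N →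
      (j:ℝ)^e ≤ (N:ℝ)^(ω-3*ν) := by
    intro e he j hj1 hjN
    have hj1' : (1:ℝ) ≤ (j:ℝ) := by exact_mod_cast hj1
    rcases le_or_gt e 0 with h0 | h0
    · exact le_trans (Real.rpow_le_one_of_one_le_of_nonpos hj1' h0)
        (Real.one_le_rpow hN1' (by linarith))
    · have hjN' : (j:ℝ) ≤ (N:ℝ) := by exact_mod_cast hjN
      exact le_trans (Real.rpow_le_rpow (by linarith) hjN' h0.le)
        (Real.rpow_le_rpow_of_exponent_le hN1' he)
  have hK : ∀ j : ℕ, j ≤ N → ‖(((A j : ℝ)):ℂ)‖ ≤ C₀*(4*(N:ℝ)^(ω-3*ν)) := by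
    intro j hj
    rw [Complex.norm_real, Real.norm_eq_abs]
    have hNpow1 : (1:ℝ) ≤ (N:ℝ)^(ω-3*ν) := Real.one_le_rpow hN1' (by linarith)
    rcases Nat.eq_zero_or_pos j with rfl | hj1
    · rw [hA0, abs_zero]
      nlinarith
    · have hb := hC₀' j hj1
      rw [hA]
      simp only []
      apply hb.trans
      have p1 := hpow (ω - 1/c) (by linarith) j hj1 hj
      have p2 := hpow (ω - 1) (by linarith) j hj1 hj
      have p3 := hpow (ω - 3*ν) le_rfl j hj1 hj
      have := mul_le_mul_of_nonneg_left
        (by linarith : 1 + (j:ℝ)^(ω-1/c) + (j:ℝ)^(ω-1) + (j:ℝ)^(ω-3*ν)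
          ≤ 4*(N:ℝ)^(ω-3*ν)) hC₀.le
      linarith
  have hGbound : ∀ M : ℕ, M ≤ N →
      ‖∑ j ∈ Finset.Icc 1 M,
        ((Set.indicator (NPS c) (fun n => (n:ℝ)^(ω - 1/c)) j - 1/c*(j:ℝ)^(ω-1) : ℝ):ℂ)
          * eR ((j:ℝ)*α)‖
      ≤ 4*C₀*(1+4*Real.pi)*(N:ℝ)^(ω-2*ν) := by
    intro M hM
    have hconv : ∑ j ∈ Finset.Icc 1 M,
        ((Set.indicator (NPS c) (fun n => (n:ℝ)^(ω - 1/c)) j - 1/c*(j:ℝ)^(ω-1) : ℝ):ℂ)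
          * eR ((j:ℝ)*α)
        = ∑ j ∈ Finset.Icc 1 M,
          ((fun i : ℕ => ((A i : ℝ):ℂ)) j - (fun i : ℕ => ((A i : ℝ):ℂ)) (j-1)) * (eR α)^j := by
      apply Finset.sum_congr rfl
      intro j hj
      rw [Finset.mem_Icc] at hj
      rw [eR_nat_mul]
      congr 1
      simp only []
      rw [← Complex.ofReal_sub, hstep j hj.1]
    rw [hconv]
    have hb := abel_bound (fun i : ℕ => ((A i : ℝ):ℂ)) (by simp [hA0]) (eR_abs α) hεb M
      (fun j hjM => hK j (le_trans hjM hM))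
    apply hb.trans
    have hMN : (M:ℝ) ≤ (N:ℝ) := by exact_mod_cast hM
    have hε0 : (0:ℝ) ≤ 4*Real.pi*((N:ℝ)^ν/(N:ℝ)) := by positivity
    have e1 : (M:ℝ)*(4*Real.pi*((N:ℝ)^ν/(N:ℝ))) ≤ 4*Real.pi*(N:ℝ)^ν := by
      have e1a := mul_le_mul_of_nonneg_right hMN hε0
      have e1b : (N:ℝ)*(4*Real.pi*((N:ℝ)^ν/(N:ℝ))) = 4*Real.pi*(N:ℝ)^ν := by
        field_simp
      linarith
    have e2 : (N:ℝ)^(ω-3*ν) ≤ (N:ℝ)^(ω-2*ν) :=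
      Real.rpow_le_rpow_of_exponent_le hN1' (by linarith)
    have e3 : (N:ℝ)^(ω-3*ν) * (N:ℝ)^ν = (N:ℝ)^(ω-2*ν) := by
      rw [← Real.rpow_add hN0]
      congr 1
      ring
    have hNp0 : (0:ℝ) ≤ (N:ℝ)^(ω-3*ν) := Real.rpow_nonneg hN0.le _
    calc C₀*(4*(N:ℝ)^(ω-3*ν))*(1 + (M:ℝ)*(4*Real.pi*((N:ℝ)^ν/(N:ℝ))))
        ≤ C₀*(4*(N:ℝ)^(ω-3*ν))*(1 + 4*Real.pi*(N:ℝ)^ν) := by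
          apply mul_le_mul_of_nonneg_left (by linarith) (by positivity)
      _ = 4*C₀*((N:ℝ)^(ω-3*ν) + 4*Real.pi*((N:ℝ)^(ω-3*ν) * (N:ℝ)^ν)) := by ring
      _ = 4*C₀*((N:ℝ)^(ω-3*ν) + 4*Real.pi*(N:ℝ)^(ω-2*ν)) := by rw [e3]
      _ ≤ 4*C₀*(1+4*Real.pi)*(N:ℝ)^(ω-2*ν) := by nlinarith [e2, hNp0]
  have hfl : ⌊((N:ℕ):ℝ)⌋₊ = N := Nat.floor_natCast N
  have hCfin : 4*C₀*(1+4*Real.pi)*(N:ℝ)^(ω-2*ν)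
      ≤ (8*C₀*(1 + 4*Real.pi) + 1)*(N:ℝ)^(ω-2*ν) := by
    apply mul_le_mul_of_nonneg_right _ (Real.rpow_nonneg hN0.le _)
    nlinarith
  constructor
  · have hiden : Tc c ω α (N:ℝ) - (1/(c:ℂ)) * Uc ω α (N:ℝ)
        = ∑ j ∈ Finset.Icc 1 N,
          ((Set.indicator (NPS c) (fun n => (n:ℝ)^(ω - 1/c)) j - 1/c*(j:ℝ)^(ω-1) : ℝ):ℂ)
            * eR ((j:ℝ)*α) := by
      rw [Tc, expSum, Uc, hfl, Finset.mul_sum, ← Finset.sum_sub_distrib]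
      apply Finset.sum_congr rfl
      intro j _
      push_cast
      ring
    rw [hiden]
    exact (hGbound N le_rfl).trans hCfin
  · have ha1 : 1 ≤ ⌈(N:ℝ)/(h:ℝ)⌉₊ :=
      Nat.ceil_pos.mpr (div_pos hN0 (by exact_mod_cast hh1))
    have haN : ⌈(N:ℝ)/(h:ℝ)⌉₊ ≤ N :=
      Nat.ceil_le.mpr (div_le_self hN0.le (by exact_mod_cast hh1))
    have hidenS : TcSharp c ω h α (N:ℝ) - (1/(c:ℂ)) * UcSharp ω h α (N:ℝ)
        = ∑ j ∈ Finset.Icc (⌈(N:ℝ)/(h:ℝ)⌉₊) N,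
          ((Set.indicator (NPS c) (fun n => (n:ℝ)^(ω - 1/c)) j - 1/c*(j:ℝ)^(ω-1) : ℝ):ℂ)
            * eR ((j:ℝ)*α) := by
      rw [TcSharp, expSumI, UcSharp, hfl, Finset.mul_sum, ← Finset.sum_sub_distrib]
      apply Finset.sum_congr rfl
      intro j _
      push_cast
      ring
    have hIoc : ∀ k : ℕ, Finset.Icc 1 k = Finset.Ioc 0 k := by
      intro k
      ext t
      simp only [Finset.mem_Icc, Finset.mem_Ioc]
      omega
    have hIoc2 : Finset.Icc (⌈(N:ℝ)/(h:ℝ)⌉₊) N = Finset.Ioc (⌈(N:ℝ)/(h:ℝ)⌉₊ - 1) N := by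
      ext t
      simp only [Finset.mem_Icc, Finset.mem_Ioc]
      omega
    have hsplitI := Finset.sum_Ioc_consecutive
      (f := fun j => ((Set.indicator (NPS c) (fun n => (n:ℝ)^(ω - 1/c)) j
        - 1/c*(j:ℝ)^(ω-1) : ℝ):ℂ) * eR ((j:ℝ)*α))
      (Nat.zero_le (⌈(N:ℝ)/(h:ℝ)⌉₊ - 1)) (by omega : ⌈(N:ℝ)/(h:ℝ)⌉₊ - 1 ≤ N)
    rw [hidenS, hIoc2]
    have heq : ∑ j ∈ Finset.Ioc (⌈(N:ℝ)/(h:ℝ)⌉₊ - 1) N,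
        ((Set.indicator (NPS c) (fun n => (n:ℝ)^(ω - 1/c)) j - 1/c*(j:ℝ)^(ω-1) : ℝ):ℂ)
          * eR ((j:ℝ)*α)
        = (∑ j ∈ Finset.Icc 1 N,
            ((Set.indicator (NPS c) (fun n => (n:ℝ)^(ω - 1/c)) j - 1/c*(j:ℝ)^(ω-1) : ℝ):ℂ)
              * eR ((j:ℝ)*α))
          - ∑ j ∈ Finset.Icc 1 (⌈(N:ℝ)/(h:ℝ)⌉₊ - 1),
            ((Set.indicator (NPS c) (fun n => (n:ℝ)^(ω - 1/c)) j - 1/c*(j:ℝ)^(ω-1) : ℝ):ℂ)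
              * eR ((j:ℝ)*α) := by
      rw [hIoc N, hIoc (⌈(N:ℝ)/(h:ℝ)⌉₊ - 1)]
      rw [← hsplitI]
      ring
    rw [heq]
    have t1 := hGbound N le_rfl
    have t2 := hGbound (⌈(N:ℝ)/(h:ℝ)⌉₊ - 1) (by omega)
    have tri : ∀ X Y : ℂ, ‖X - Y‖ ≤ ‖X‖ + ‖Y‖ := by
      intro X Y
      calc ‖X - Y‖ = ‖X + (-Y)‖ := by ring_nf
        _ ≤ ‖X‖ + ‖-Y‖ := norm_add_le _ _
        _ = ‖X‖ + ‖Y‖ := by rw [norm_neg]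
    apply (tri _ _).trans
    have hNp0 : (0:ℝ) ≤ (N:ℝ)^(ω-2*ν) := Real.rpow_nonneg hN0.le _
    nlinarith [t1, t2]
end
end

section
/- Let k ≥ 2 be an integer and c > 1 a non-integer, and suppose hypothesis (PSW) holds with constant 0 < P(c,k) ≤ 1/(ck). Let ω be a real number. Then there is a constant C such that uniformly for α ∈ [0,1) and for every ε > 0, for all x ≥ 2: | ∑_{n≤x} n^{ω−1/(ck)} 1_{N_(c)^k}(n) e(nα) − (1/c) ∑_{n≤x} n^{ω−1/k} 1_{N^k}(n) e(nα) | ≤ C_ε·x^{max{ω − P(c,k), 0} + ε}. -/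
open MeasureTheory Filter Finset Set

noncomputable section

lemma abs_eR' (t : ℝ) : ‖eR t‖ = 1 := by
  rw [eR, Complex.norm_exp]
  have : (2 * (Real.pi:ℂ) * Complex.I * (t:ℂ)).re = 0 := by
    simp [Complex.mul_re, Complex.mul_im]
  rw [this, Real.exp_zero]

lemma aux_rpow_diff (β : ℝ) (a : ℝ) (ha : 1 ≤ a) :
    |(a+1) ^ β - a ^ β| ≤ (|β| * 2 ^ max (β-1) 0) * a ^ (β-1) := by
  have ha0 : (0:ℝ) < a := lt_of_lt_of_le one_pos ha
  have key := norm_image_sub_le_of_norm_deriv_le_segment'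
    (f := fun t : ℝ => t ^ β) (f' := fun t : ℝ => β * t ^ (β-1))
    (a := a) (b := a+1) (C := (|β| * 2 ^ max (β-1) 0) * a ^ (β-1))
    (fun t ht => (Real.hasDerivAt_rpow_const
      (Or.inl (ne_of_gt (lt_of_lt_of_le ha0 ht.1)))).hasDerivWithinAt)
    ?_ (a+1) (by constructor <;> linarith)
  · simpa using key
  · intro t ht
    have ht0 : 0 < t := lt_of_lt_of_le ha0 ht.1
    rw [Real.norm_eq_abs, abs_mul, abs_of_nonneg (Real.rpow_nonneg ht0.le _)]
    rw [mul_assoc]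
    apply mul_le_mul_of_nonneg_left _ (abs_nonneg β)
    rcases le_or_gt β 1 with h | h
    · rw [max_eq_right (by linarith), Real.rpow_zero, one_mul]
      exact Real.rpow_le_rpow_of_nonpos ha0 ht.1 (by linarith)
    · rw [max_eq_left (by linarith)]
      calc t ^ (β-1) ≤ (2*a) ^ (β-1) := by
            apply Real.rpow_le_rpow ht0.le (by linarith [ht.2.le]) (by linarith)
        _ = 2 ^ (β-1) * a ^ (β-1) := Real.mul_rpow (by norm_num) ha0.le

lemma aux_sum_rpow (δ : ℝ) (hδ : 0 < δ) (N : ℕ) :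
    ∑ i ∈ Finset.range N, ((i:ℝ)+1) ^ (δ-1) ≤ (1 / min δ 1) * (N:ℝ) ^ δ := by
  have hm : 0 < min δ 1 := lt_min hδ one_pos
  rw [div_mul_eq_mul_div, one_mul, le_div_iff₀ hm, mul_comm]
  have step : ∀ i : ℕ, min δ 1 * ((i:ℝ)+1) ^ (δ-1) ≤ ((i:ℝ)+1) ^ δ - (i:ℝ) ^ δ := by
    intro i
    set n : ℝ := (i:ℝ) + 1 with hn
    have hn1 : 1 ≤ n := by rw [hn]; linarith [Nat.cast_nonneg (α:=ℝ) i]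
    have hn0 : (0:ℝ) < n := by positivity
    have hi : (i:ℝ) = n - 1 := by rw [hn]; ring
    rw [hi]
    have hsub : (0:ℝ) ≤ n - 1 := by linarith
    rcases le_or_gt 1 δ with h | h
    · rw [min_eq_right h]
      have h1 : (n-1) ^ δ = (n-1) ^ (δ-1) * (n-1) := by
        rw [← Real.rpow_add_one' hsub (by linarith)]; ring_nf
      have h2 : n ^ δ = n ^ (δ-1) * n := by
        rw [← Real.rpow_add_one (ne_of_gt hn0)]; ring_nf
      have h3 : (n-1) ^ (δ-1) ≤ n ^ (δ-1) := Real.rpow_le_rpow hsub (by linarith) (by linarith)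
      have h4 : (n-1) ^ (δ-1) * (n-1) ≤ n ^ (δ-1) * (n-1) := mul_le_mul_of_nonneg_right h3 hsub
      rw [h1, h2]; nlinarith
    · rw [min_eq_left h.le]
      have hb := rpow_one_add_le_one_add_mul_self (s := -(1/n))
        (by rw [neg_le_neg_iff]; exact (div_le_one hn0).2 hn1) hδ.le h.le
      have he : (1 + -(1/n)) = (n-1)/n := by field_simp; ring
      rw [he] at hb
      have hmul : ((n-1)/n) ^ δ * n ^ δ ≤ (1 + δ * -(1/n)) * n ^ δ :=
        mul_le_mul_of_nonneg_right hb (Real.rpow_nonneg hn0.le δ)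
      have hl : ((n-1)/n) ^ δ * n ^ δ = (n-1) ^ δ := by
        rw [← Real.mul_rpow (by positivity) hn0.le]
        congr 1; field_simp
      have hr : (1 + δ * -(1/n)) * n ^ δ = n ^ δ - δ * (n ^ δ / n) := by ring
      have hr2 : n ^ δ / n = n ^ (δ - 1) := (Real.rpow_sub_one (ne_of_gt hn0) δ).symm
      rw [hl, hr, hr2] at hmul
      linarith
  calc min δ 1 * ∑ i ∈ Finset.range N, ((i:ℝ)+1) ^ (δ-1)
      = ∑ i ∈ Finset.range N, min δ 1 * ((i:ℝ)+1) ^ (δ-1) := Finset.mul_sum _ _ _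
    _ ≤ ∑ i ∈ Finset.range N, (((i:ℝ)+1) ^ δ - (i:ℝ) ^ δ) := Finset.sum_le_sum fun i _ => step i
    _ = (N:ℝ) ^ δ - (0:ℝ) ^ δ := by
        have := Finset.sum_range_sub (fun i : ℕ => (i:ℝ) ^ δ) N
        simpa [Nat.cast_add, Nat.cast_one] using this
    _ ≤ (N:ℝ) ^ δ := by rw [Real.zero_rpow (ne_of_gt hδ)]; simp

set_option maxHeartbeats 1000000 in
/-- Weighted transfer estimate from `N_(c)^k` to `N^k`. -/
theorem stmt12 (k : ℕ) (hk : 2 ≤ k) (c : ℝ) (hc1 : 1 < c) (hcni : ∀ m : ℤ, c ≠ (m : ℝ))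
    (P : ℝ) (hP0 : 0 < P) (hP1 : P ≤ 1 / (c * k)) (hPSW : PSW c k P)
    (ω : ℝ) :
    ∀ ε > (0:ℝ), ∃ C > (0:ℝ), ∀ α ∈ Set.Ico (0:ℝ) 1, ∀ x : ℝ, 2 ≤ x →
      ‖(expSum (NPSpow c k) (fun n => (n : ℝ) ^ (ω - 1 / (c * k))) α x
          - (1 / c) * expSum (Npow k) (fun n => (n : ℝ) ^ (ω - 1 / k)) α x)‖
        ≤ C * x ^ (max (ω - P) 0 + ε) := by
  obtain ⟨C0, hC0⟩ := hPSW
  intro ε hε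
  have hc0 : (0:ℝ) < c := lt_trans one_pos hc1
  have hkR : (0:ℝ) < (k:ℝ) := by positivity
  set β := ω - 1 / (c * (k:ℝ)) with hβ
  set θ := 1 / (c * (k:ℝ)) - P with hθ
  set δ := max (ω - P) 0 + ε with hδdef
  have hδ0 : 0 < δ := add_pos_of_nonneg_of_pos (le_max_right _ _) hε
  have hmin : 0 < min δ 1 := lt_min hδ0 one_pos
  set K := |β| * 2 ^ max (β-1) 0 with hK
  have hK0 : 0 ≤ K := by positivity
  set C1 := max C0 2 with hC1def
  have hC1 : (0:ℝ) < C1 := lt_of_lt_of_le two_pos (le_max_right _ _)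
  have h2m1 : (0:ℝ) < 2 ^ max (1-δ) 0 := Real.rpow_pos_of_pos two_pos _
  have hX0 : 0 ≤ K * C1 * 2 ^ max (1-δ) 0 * (1 / min δ 1) :=
    mul_nonneg (mul_nonneg (mul_nonneg hK0 hC1.le) h2m1.le) (le_of_lt (by positivity))
  refine ⟨C1 + K * C1 * 2 ^ max (1-δ) 0 * (1 / min δ 1) + 1, by linarith, ?_⟩
  intro α hα x hx
  set w₂ : ℕ → ℝ := fun n => (n:ℝ) ^ ((1/c - 1)/(k:ℝ)) with hw₂
  set N := ⌊x⌋₊ with hNdef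
  have hN2 : 2 ≤ N := Nat.le_floor (by exact_mod_cast hx)
  have hNx : (N:ℝ) ≤ x := Nat.floor_le (by linarith)
  have hx1 : (1:ℝ) ≤ x := by linarith
  set g : ℕ → ℂ := fun n => if n = 0 then 0 else
    (((NPSpow c k).indicator (fun _ => (1:ℝ)) n : ℝ) : ℂ) * eR (n * α)
      - (1/c) * ((((Npow k).indicator w₂ n : ℝ)) : ℂ) * eR (n * α) with hg
  set A : ℕ → ℂ := fun m => expSum (NPSpow c k) (fun _ => 1) α m
      - (1/c) * expSum (Npow k) w₂ α m with hA
  have hins : ∀ m : ℕ, Finset.range (m+1) = insert 0 (Finset.Icc 1 m) := by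
    intro m; ext j; simp [Nat.lt_succ_iff]; omega
  have hAeq : ∀ m : ℕ, A m = ∑ i ∈ Finset.range (m+1), g i := by
    intro m
    rw [hins m, Finset.sum_insert (by simp)]
    have hg0 : g 0 = 0 := by simp [hg]
    rw [hg0, zero_add, hA]
    simp only [expSum, Nat.floor_natCast]
    rw [Finset.mul_sum, ← Finset.sum_sub_distrib]
    apply Finset.sum_congr rfl
    intro n hn
    have hn0 : n ≠ 0 := by simp only [Finset.mem_Icc] at hn; omega
    rw [hg]
    simp only [if_neg hn0]
    ring
  have norm_eR : ∀ t : ℝ, ‖eR t‖ = 1 := fun t => by rw [abs_eR']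
  have hAbound : ∀ m : ℕ, 1 ≤ m → ‖A m‖ ≤ C1 * (m:ℝ) ^ θ := by
    intro m hm
    rcases eq_or_lt_of_le hm with h1 | h2
    · rw [← h1]
      have he1 : A 1 = g 1 := by
        rw [hAeq 1, Finset.sum_range_succ, Finset.sum_range_one]
        simp [hg]
      have hb1 : |((NPSpow c k).indicator (fun _ => (1:ℝ)) 1)| ≤ 1 := by
        classical
        by_cases h : (1:ℕ) ∈ NPSpow c k
        · rw [Set.indicator_of_mem h]; norm_num
        · rw [Set.indicator_of_notMem h]; norm_num
      have hb2 : |((Npow k).indicator w₂ 1)| ≤ 1 := by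
        classical
        by_cases h : (1:ℕ) ∈ Npow k
        · rw [Set.indicator_of_mem h, hw₂]; norm_num
        · rw [Set.indicator_of_notMem h]; norm_num
      have hc1' : 0 < 1/c := by positivity
      have hcc : 1/c ≤ 1 := by rw [div_le_one hc0]; linarith
      have habs : ‖g 1‖ ≤ 1 + 1/c := by
        rw [hg]
        simp only [if_neg one_ne_zero]
        refine le_trans (norm_sub_le _ _) ?_
        rw [norm_mul, norm_mul, norm_mul, norm_eR, mul_one, mul_one]
        have e1 : ‖((1:ℂ)/(c:ℝ))‖ = 1/c := by
          rw [norm_div, norm_one, Complex.norm_real, Real.norm_eq_abs, abs_of_pos hc0]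
        rw [e1, Complex.norm_real, Complex.norm_real, Real.norm_eq_abs, Real.norm_eq_abs]
        nlinarith [hb1, hb2, abs_nonneg ((Npow k).indicator w₂ 1)]
      rw [he1]
      refine le_trans habs ?_
      have : ((1:ℕ):ℝ) ^ θ = 1 := by rw [Nat.cast_one, Real.one_rpow]
      rw [this, mul_one]
      have : (2:ℝ) ≤ C1 := le_max_right _ _
      linarith
    · have h2m : (2:ℝ) ≤ (m:ℝ) := by exact_mod_cast h2
      refine le_trans (hC0 α hα (m:ℝ) h2m) ?_
      exact mul_le_mul_of_nonneg_right (le_max_left _ _) (Real.rpow_nonneg (Nat.cast_nonneg m) _)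
  have hA0 : A 0 = 0 := by
    rw [hAeq 0, Finset.sum_range_one]
    simp [hg]
  set F : ℕ → ℂ := fun i => (((i:ℝ) ^ β : ℝ) : ℂ) with hF
  have key : expSum (NPSpow c k) (fun n => (n : ℝ) ^ (ω - 1 / (c * k))) α x
      - (1 / c) * expSum (Npow k) (fun n => (n : ℝ) ^ (ω - 1 / k)) α x
      = ∑ i ∈ Finset.range (N+1), F i • g i := by
    rw [hins N, Finset.sum_insert (by simp)]
    have hg0 : g 0 = 0 := by simp [hg]
    rw [hg0, smul_zero, zero_add]
    simp only [expSum, ← hNdef]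
    rw [Finset.mul_sum, ← Finset.sum_sub_distrib]
    apply Finset.sum_congr rfl
    intro n hn
    rw [Finset.mem_Icc] at hn
    have hn0 : n ≠ 0 := by omega
    have hnR : (0:ℝ) < (n:ℝ) := by positivity
    rw [hg, hF]
    simp only [if_neg hn0]
    have e1 : (NPSpow c k).indicator (fun n => (n:ℝ) ^ (ω - 1/(c*(k:ℝ)))) n
        = (n:ℝ) ^ β * (NPSpow c k).indicator (fun _ => (1:ℝ)) n := by
      classical
      by_cases h : n ∈ NPSpow c k
      · rw [Set.indicator_of_mem h, Set.indicator_of_mem h, mul_one, hβ]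
      · rw [Set.indicator_of_notMem h, Set.indicator_of_notMem h, mul_zero]
    have e2 : (Npow k).indicator (fun n => (n:ℝ) ^ (ω - 1/(k:ℝ))) n
        = (n:ℝ) ^ β * (Npow k).indicator w₂ n := by
      classical
      by_cases h : n ∈ Npow k
      · rw [Set.indicator_of_mem h, Set.indicator_of_mem h, hw₂, hβ]
        rw [← Real.rpow_add hnR]
        congr 1
        field_simp
        ring
      · rw [Set.indicator_of_notMem h, Set.indicator_of_notMem h, mul_zero]
    rw [e1, e2, smul_eq_mul]
    push_cast
    ring
  rw [key]
  have parts := Finset.sum_range_by_parts F g (N+1)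
  simp only [Nat.add_sub_cancel] at parts
  rw [parts]
  have hGA : ∀ i : ℕ, (∑ j ∈ Finset.range (i+1), g j) = A i := fun i => (hAeq i).symm
  simp only [hGA]
  have hFnorm : ∀ i : ℕ, ‖F i‖ = (i:ℝ) ^ β := by
    intro i
    rw [hF, Complex.norm_real, Real.norm_eq_abs, abs_of_nonneg (Real.rpow_nonneg (Nat.cast_nonneg i) _)]
  have hN1R : (1:ℝ) ≤ (N:ℝ) := by
    have : (1:ℕ) ≤ N := by omega
    exact_mod_cast this
  have hN0R : (0:ℝ) < (N:ℝ) := by linarith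
  -- term 1 bound
  have hxδ : (0:ℝ) ≤ x ^ δ := Real.rpow_nonneg (by linarith) δ
  have ht1 : ‖F N • A N‖ ≤ C1 * x ^ δ := by
    rw [norm_smul, hFnorm]
    calc (N:ℝ) ^ β * ‖A N‖ ≤ (N:ℝ) ^ β * (C1 * (N:ℝ) ^ θ) := by
          apply mul_le_mul_of_nonneg_left (hAbound N (by omega))
            (Real.rpow_nonneg (Nat.cast_nonneg N) _)
      _ = C1 * (N:ℝ) ^ (ω - P) := by
          rw [mul_comm ((N:ℝ)^β), mul_assoc, ← Real.rpow_add hN0R]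
          congr 2
          rw [hβ, hθ]; ring
      _ ≤ C1 * x ^ δ := by
          apply mul_le_mul_of_nonneg_left _ hC1.le
          have h1 : (N:ℝ) ^ (ω - P) ≤ x ^ max (ω - P) 0 := by
            rcases le_or_gt 0 (ω - P) with h | h
            · calc (N:ℝ) ^ (ω - P) ≤ x ^ (ω - P) :=
                    Real.rpow_le_rpow (Nat.cast_nonneg N) hNx h
                _ ≤ x ^ max (ω - P) 0 :=
                    Real.rpow_le_rpow_of_exponent_le hx1 (le_max_left _ _)
            · calc (N:ℝ) ^ (ω - P) ≤ 1 :=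
                    Real.rpow_le_one_of_one_le_of_nonpos hN1R h.le
                _ = x ^ (0:ℝ) := (Real.rpow_zero x).symm
                _ ≤ x ^ max (ω - P) 0 :=
                    Real.rpow_le_rpow_of_exponent_le hx1 (le_max_right _ _)
          refine le_trans h1 (Real.rpow_le_rpow_of_exponent_le hx1 ?_)
          rw [hδdef]; linarith
  -- term 2 bound
  have ht2 : ‖∑ i ∈ Finset.range N, (F (i+1) - F i) • A i‖
      ≤ K * C1 * 2 ^ max (1-δ) 0 * (1 / min δ 1) * x ^ δ := by
    refine le_trans (norm_sum_le _ _) ?_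
    have hterm : ∀ i ∈ Finset.range N, ‖(F (i+1) - F i) • A i‖
        ≤ K * C1 * 2 ^ max (1-δ) 0 * ((i:ℝ)+1) ^ (δ-1) := by
      intro i _
      rcases Nat.eq_zero_or_pos i with rfl | hi
      · rw [hA0, smul_zero, norm_zero]
        positivity
      · have hiR : (1:ℝ) ≤ (i:ℝ) := by exact_mod_cast hi
        have hi0R : (0:ℝ) < (i:ℝ) := by linarith
        rw [norm_smul]
        have hd : ‖F (i+1) - F i‖ ≤ K * (i:ℝ) ^ (β-1) := by
          have hcast : F (i+1) - F i = ((((i:ℝ)+1) ^ β - (i:ℝ) ^ β : ℝ) : ℂ) := by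
            rw [hF]; push_cast; ring
          rw [hcast, Complex.norm_real, Real.norm_eq_abs, hK]
          exact aux_rpow_diff β (i:ℝ) hiR
        have hcomb : ‖F (i+1) - F i‖ * ‖A i‖ ≤ (K * (i:ℝ) ^ (β-1)) * (C1 * (i:ℝ) ^ θ) := by
          apply mul_le_mul hd (hAbound i hi) (norm_nonneg _)
          positivity
        refine le_trans hcomb ?_
        have he : (K * (i:ℝ) ^ (β-1)) * (C1 * (i:ℝ) ^ θ) = K * C1 * (i:ℝ) ^ (ω - P - 1) := by
          rw [mul_mul_mul_comm, ← Real.rpow_add hi0R]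
          congr 2
          rw [hβ, hθ]; ring
        rw [he]
        have hmono : (i:ℝ) ^ (ω - P - 1) ≤ (i:ℝ) ^ (δ - 1) := by
          apply Real.rpow_le_rpow_of_exponent_le hiR
          rw [hδdef]
          have : ω - P ≤ max (ω - P) 0 := le_max_left _ _
          linarith
        have hshift : (i:ℝ) ^ (δ - 1) ≤ 2 ^ max (1-δ) 0 * ((i:ℝ)+1) ^ (δ-1) := by
          rcases le_or_gt 1 δ with h | h
          · rw [max_eq_right (by linarith), Real.rpow_zero, one_mul]
            exact Real.rpow_le_rpow hi0R.le (by linarith) (by linarith)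
          · rw [max_eq_left (by linarith)]
            have h2i : ((2:ℝ)*(i:ℝ)) ^ (δ-1) ≤ ((i:ℝ)+1) ^ (δ-1) :=
              Real.rpow_le_rpow_of_nonpos (by positivity) (by linarith) (by linarith)
            have hmr : ((2:ℝ)*(i:ℝ)) ^ (δ-1) = 2 ^ (δ-1) * (i:ℝ) ^ (δ-1) :=
              Real.mul_rpow (by norm_num) hi0R.le
            calc (i:ℝ) ^ (δ-1) = 2 ^ (1-δ) * (2 ^ (δ-1) * (i:ℝ) ^ (δ-1)) := by
                  rw [← mul_assoc, ← Real.rpow_add two_pos]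
                  norm_num
              _ = 2 ^ (1-δ) * ((2:ℝ)*(i:ℝ)) ^ (δ-1) := by rw [hmr]
              _ ≤ 2 ^ (1-δ) * ((i:ℝ)+1) ^ (δ-1) :=
                  mul_le_mul_of_nonneg_left h2i (Real.rpow_nonneg (by norm_num) _)
        calc K * C1 * (i:ℝ) ^ (ω - P - 1) ≤ K * C1 * (i:ℝ) ^ (δ - 1) := by
              apply mul_le_mul_of_nonneg_left hmono (mul_nonneg hK0 hC1.le)
          _ ≤ K * C1 * (2 ^ max (1-δ) 0 * ((i:ℝ)+1) ^ (δ-1)) := by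
              apply mul_le_mul_of_nonneg_left hshift (mul_nonneg hK0 hC1.le)
          _ = K * C1 * 2 ^ max (1-δ) 0 * ((i:ℝ)+1) ^ (δ-1) := by ring
    refine le_trans (Finset.sum_le_sum hterm) ?_
    rw [← Finset.mul_sum]
    have hsum := aux_sum_rpow δ hδ0 N
    calc K * C1 * 2 ^ max (1-δ) 0 * (∑ i ∈ Finset.range N, ((i:ℝ)+1) ^ (δ-1))
        ≤ K * C1 * 2 ^ max (1-δ) 0 * ((1 / min δ 1) * (N:ℝ) ^ δ) := by
          apply mul_le_mul_of_nonneg_left hsum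
            (mul_nonneg (mul_nonneg hK0 hC1.le) h2m1.le)
      _ ≤ K * C1 * 2 ^ max (1-δ) 0 * ((1 / min δ 1) * x ^ δ) := by
          apply mul_le_mul_of_nonneg_left _ (mul_nonneg (mul_nonneg hK0 hC1.le) h2m1.le)
          apply mul_le_mul_of_nonneg_left
            (Real.rpow_le_rpow (Nat.cast_nonneg N) hNx hδ0.le)
            (le_of_lt (by positivity))
      _ = K * C1 * 2 ^ max (1-δ) 0 * (1 / min δ 1) * x ^ δ := by ring
  calc ‖F N • A N - ∑ i ∈ Finset.range N, (F (i+1) - F i) • A i‖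
      ≤ ‖F N • A N‖ + ‖∑ i ∈ Finset.range N, (F (i+1) - F i) • A i‖ := norm_sub_le _ _
    _ ≤ C1 * x ^ δ + K * C1 * 2 ^ max (1-δ) 0 * (1 / min δ 1) * x ^ δ := add_le_add ht1 ht2
    _ ≤ (C1 + K * C1 * 2 ^ max (1-δ) 0 * (1 / min δ 1) + 1) * x ^ δ := by nlinarith [hxδ]
end
end
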